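/- arXiv:2009.14680 — 11 statements merged into one kernel-verified Lean document; each statement's English description precedes it below -/
import Mathlib

section
/- Let Y be a first-countable topological space and G a topological group acting continuously on Y, and endow the orbit space Y/G with the quotient topology. If (x_n) is a sequence in Y such that the orbits [x_n] converge to [x] in Y/G for some x ∈ Y, then there exist a strictly increasing sequence of indices (n_k) and elements g_k ∈ G such that g_k • x_{n_k} converges to x in Y. -/
/-- Let `Y` be a first-countable topological space and `G` a topological
group acting continuously on `Y`, with the orbit space `Y/G` carrying the quotient topology.
If `(x n)` is a sequence in `Y` whose orbits converge to the orbit of `x₀` in `Y/G`, then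
there are a strictly increasing sequence of indices `n` and group elements `g k` such that
`g k • x (n k)` converges to `x₀` in `Y`. -/
theorem orbit_quotient_convergence_lift
    {Y : Type*} [TopologicalSpace Y] [FirstCountableTopology Y]
    {G : Type*} [Group G] [TopologicalSpace G] [IsTopologicalGroup G]
    [MulAction G Y] [ContinuousSMul G Y]
    (x : ℕ → Y) (x₀ : Y)
    (h : Filter.Tendsto (fun n => Quotient.mk (MulAction.orbitRel G Y) (x n))
      Filter.atTop (nhds (Quotient.mk (MulAction.orbitRel G Y) x₀))) :
    ∃ n : ℕ → ℕ, StrictMono n ∧ ∃ g : ℕ → G,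
      Filter.Tendsto (fun k => g k • x (n k)) Filter.atTop (nhds x₀) := by
  obtain ⟨U, hU⟩ := (nhds x₀).exists_antitone_basis
  have hopen : IsOpenMap (Quotient.mk (MulAction.orbitRel G Y)) :=
    isOpenMap_quotient_mk'_mul (Γ := G) (T := Y)
  have key : ∀ k : ℕ, ∀ᶠ m in Filter.atTop, ∃ g : G, g • x m ∈ U k := by
    intro k
    have hUk : U k ∈ nhds x₀ := hU.mem k
    have hV : IsOpen (interior (U k)) := isOpen_interior
    have hx₀ : x₀ ∈ interior (U k) := mem_interior_iff_mem_nhds.2 hUk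
    have himg : Quotient.mk (MulAction.orbitRel G Y) '' interior (U k) ∈
        nhds (Quotient.mk (MulAction.orbitRel G Y) x₀) :=
      (hopen _ hV).mem_nhds ⟨x₀, hx₀, rfl⟩
    filter_upwards [h himg] with m hm
    obtain ⟨y, hy, hmy⟩ := hm
    obtain ⟨g, hg⟩ : x m ∈ MulAction.orbit G y := Quotient.eq''.1 hmy.symm
    exact ⟨g⁻¹, by rw [← hg, inv_smul_smul]; exact interior_subset hy⟩
  obtain ⟨n, hn, hP⟩ := Filter.extraction_forall_of_eventually key
  choose g hg using hP
  exact ⟨n, hn, g, hU.tendsto hg⟩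
end

section
/- Let S = {x ∈ X : h(x) ≠ 0}, with the subspace topology. Then the restricted ℂ*-action on S is proper; that is, the map ℂ* × S → S × S sending (t, x) to (t • x, x) is a proper map. -/
open Filter Topology

/-- The set `S = {x : X | h x ≠ 0}` of points where `h` does not vanish, viewed as a
`ℂˣ`-invariant subset of `X`; invariance follows from the homogeneity of `h`. -/
def nonvanishingSubMulAction {X : Type*} [MulAction ℂˣ X] {n : ℕ}
    (h : X → Fin n → ℂ) (d : Fin n → ℕ)
    (hhom : ∀ (t : ℂˣ) (x : X) (j : Fin n), h (t • x) j = (t : ℂ) ^ d j * h x j) :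
    SubMulAction ℂˣ X where
  carrier := {x : X | h x ≠ 0}
  smul_mem' := by
    intro t x hx h0
    apply hx
    funext j
    have hj := hhom t x j
    rw [h0] at hj
    simp only [Pi.zero_apply] at hj
    rcases mul_eq_zero.mp hj.symm with h1 | h2
    · exact absurd h1 (pow_ne_zero _ t.ne_zero)
    · exact h2

/-- Let `X` be a metrizable space with a continuous `ℂˣ`-action, and
`h : X → ℂⁿ` a continuous proper map which is homogeneous of degrees `d j ≥ 1` for the
action. Then the `ℂˣ`-action on `S = {x | h x ≠ 0}` (with the subspace topology) is
proper: the map `ℂˣ × S → S × S`, `(t, x) ↦ (t • x, x)` is a proper map. -/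
theorem cstar_action_proper_off_nilpotent_cone
    {X : Type*} [TopologicalSpace X] [TopologicalSpace.MetrizableSpace X]
    [MulAction ℂˣ X] [ContinuousSMul ℂˣ X]
    {n : ℕ} (h : X → Fin n → ℂ) (hcont : Continuous h)
    (hproper : ∀ K : Set (Fin n → ℂ), IsCompact K → IsCompact (h ⁻¹' K))
    (d : Fin n → ℕ) (hd : ∀ j, 1 ≤ d j)
    (hhom : ∀ (t : ℂˣ) (x : X) (j : Fin n), h (t • x) j = (t : ℂ) ^ d j * h x j) :
    IsProperMap (fun p : ℂˣ × (nonvanishingSubMulAction h d hhom) =>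
      ((p.1 • p.2, p.2) :
        (nonvanishingSubMulAction h d hhom) × (nonvanishingSubMulAction h d hhom))) := by
  set S := nonvanishingSubMulAction h d hhom with hS
  -- continuity of the action map on S
  have hcS : Continuous (fun p : ℂˣ × S => (p.1 • p.2 : S)) := by
    rw [continuous_induced_rng]
    have : (Subtype.val ∘ fun p : ℂˣ × S => (p.1 • p.2 : S)) =
        fun p : ℂˣ × S => p.1 • (p.2 : X) := rfl
    rw [this]
    exact continuous_smul.comp (continuous_fst.prodMk (continuous_subtype_val.comp
      continuous_snd))
  rw [isProperMap_iff_ultrafilter]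
  refine ⟨hcS.prodMk continuous_snd, ?_⟩
  intro 𝒰 y hy
  have hy1 : Tendsto (fun p : ℂˣ × S => (p.1 • p.2 : S)) ↑𝒰 (𝓝 y.1) :=
    ((continuous_fst.tendsto y).comp hy)
  have hy2 : Tendsto (fun p : ℂˣ × S => p.2) ↑𝒰 (𝓝 y.2) :=
    ((continuous_snd.tendsto y).comp hy)
  -- push to X and apply h
  have H1 : Tendsto (fun p : ℂˣ × S => h (p.1 • (p.2 : X))) ↑𝒰 (𝓝 (h ↑y.1)) := by
    have := ((hcont.comp continuous_subtype_val).tendsto y.1).comp hy1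
    exact this
  have H2 : Tendsto (fun p : ℂˣ × S => h (p.2 : X)) ↑𝒰 (𝓝 (h ↑y.2)) :=
    ((hcont.comp continuous_subtype_val).tendsto y.2).comp hy2
  -- componentwise norms
  have N1 : ∀ j : Fin n, Tendsto (fun p : ℂˣ × S => ‖(p.1 : ℂ)‖ ^ d j * ‖h (p.2 : X) j‖)
      ↑𝒰 (𝓝 ‖h (↑y.1) j‖) := by
    intro j
    have T := ((continuous_norm.comp (continuous_apply j)).tendsto (h ↑y.1)).comp H1
    have T' : Tendsto (fun p : ℂˣ × S => ‖h (p.1 • (p.2 : X)) j‖) ↑𝒰 (𝓝 ‖h (↑y.1) j‖) := T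
    convert T' using 2 with p
    rw [hhom p.1 (p.2 : X) j, norm_mul, norm_pow]
  have N2 : ∀ j : Fin n, Tendsto (fun p : ℂˣ × S => ‖h (p.2 : X) j‖) ↑𝒰 (𝓝 ‖h (↑y.2) j‖) :=
    fun j => (((continuous_norm.comp (continuous_apply j)).tendsto (h ↑y.2)).comp H2 :)
  -- choose coordinates where h is nonzero at the limits
  obtain ⟨j, hj⟩ : ∃ j, h (↑y.2) j ≠ 0 := Function.ne_iff.mp y.2.2
  obtain ⟨j', hj'⟩ : ∃ j', h (↑y.1) j' ≠ 0 := Function.ne_iff.mp y.1.2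
  have ha : (0:ℝ) < ‖h (↑y.2) j‖ := norm_pos_iff.mpr hj
  have hc : (0:ℝ) < ‖h (↑y.1) j'‖ := norm_pos_iff.mpr hj'
  set a := ‖h (↑y.2) j‖
  set b := ‖h (↑y.2) j'‖
  set c := ‖h (↑y.1) j'‖
  set B := ‖h (↑y.1) j‖ + 1 with hB
  have hb0 : (0:ℝ) ≤ b := norm_nonneg _
  set R : ℝ := max 1 (B / (a / 2)) with hR
  set ε : ℝ := (c / 2) / (b + 1) with hε
  have hεpos : 0 < ε := div_pos (by linarith) (by linarith)
  set r : ℝ := min 1 ε with hr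
  have hrpos : 0 < r := lt_min one_pos hεpos
  -- eventual upper bound on ‖t‖
  have EU : ∀ᶠ p : ℂˣ × S in ↑𝒰, ‖(p.1 : ℂ)‖ ≤ R := by
    have E1 : ∀ᶠ p : ℂˣ × S in ↑𝒰, a / 2 < ‖h (p.2 : X) j‖ :=
      (N2 j).eventually (eventually_gt_nhds (by linarith))
    have E2 : ∀ᶠ p : ℂˣ × S in ↑𝒰, ‖(p.1 : ℂ)‖ ^ d j * ‖h (p.2 : X) j‖ < B :=
      (N1 j).eventually (eventually_lt_nhds (lt_add_one _))
    filter_upwards [E1, E2] with p m1 m2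
    have htn : (0:ℝ) ≤ ‖(p.1 : ℂ)‖ := norm_nonneg _
    have hpow : ‖(p.1 : ℂ)‖ ^ d j ≤ B / (a / 2) := by
      rw [le_div_iff₀ (by linarith)]
      nlinarith [pow_nonneg htn (d j)]
    rcases le_or_gt ‖(p.1 : ℂ)‖ 1 with h1 | h1
    · exact le_trans h1 (le_max_left _ _)
    · exact le_trans (le_trans (le_self_pow₀ h1.le (Nat.one_le_iff_ne_zero.mp (hd j))) hpow)
        (le_max_right _ _)
  -- eventual lower bound on ‖t‖
  have EL : ∀ᶠ p : ℂˣ × S in ↑𝒰, r ≤ ‖(p.1 : ℂ)‖ := by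
    have F1 : ∀ᶠ p : ℂˣ × S in ↑𝒰, ‖h (p.2 : X) j'‖ < b + 1 :=
      (N2 j').eventually (eventually_lt_nhds (lt_add_one _))
    have F2 : ∀ᶠ p : ℂˣ × S in ↑𝒰, c / 2 < ‖(p.1 : ℂ)‖ ^ d j' * ‖h (p.2 : X) j'‖ :=
      (N1 j').eventually (eventually_gt_nhds (by linarith))
    filter_upwards [F1, F2] with p m1 m2
    have htn : (0:ℝ) ≤ ‖(p.1 : ℂ)‖ := norm_nonneg _
    have hpow : ε ≤ ‖(p.1 : ℂ)‖ ^ d j' := by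
      rw [hε, div_le_iff₀ (by linarith)]
      nlinarith [pow_nonneg htn (d j'), norm_nonneg (h (p.2 : X) j')]
    rcases le_or_gt 1 ‖(p.1 : ℂ)‖ with h1 | h1
    · exact le_trans (min_le_left _ _) h1
    · exact le_trans (min_le_right _ _)
        (le_trans hpow (pow_le_of_le_one htn h1.le (Nat.one_le_iff_ne_zero.mp (hd j'))))
  -- the annulus
  set A : Set ℂ := {z : ℂ | r ≤ ‖z‖} ∩ {z : ℂ | ‖z‖ ≤ R} with hA
  have hAcomp : IsCompact A := by
    refine (isCompact_closedBall (0:ℂ) R).of_isClosed_subset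
      ((isClosed_le continuous_const continuous_norm).inter
        (isClosed_le continuous_norm continuous_const)) ?_
    intro z hz
    simpa [Metric.mem_closedBall, dist_eq_norm] using hz.2
  have hmemA : ∀ᶠ p : ℂˣ × S in ↑𝒰, ((p.1 : ℂ)) ∈ A := by
    filter_upwards [EU, EL] with p h1 h2
    exact ⟨h2, h1⟩
  -- the ultrafilter of values of t converges in the annulus
  obtain ⟨z, hzA, hzle⟩ := hAcomp.ultrafilter_le_nhds (𝒰.map (fun p : ℂˣ × S => ((p.1 : ℂˣ) : ℂ)))
    (le_principal_iff.mpr (by exact hmemA))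
  have hz0 : z ≠ 0 := by
    intro h0
    have := hzA.1
    rw [h0] at this
    simp only [Set.mem_setOf_eq, norm_zero] at this
    linarith
  set t : ℂˣ := Units.mk0 z hz0 with ht
  have hT : Tendsto (fun p : ℂˣ × S => p.1) ↑𝒰 (𝓝 t) := by
    rw [Units.isOpenEmbedding_val.toIsEmbedding.tendsto_nhds_iff]
    exact hzle
  have hle : (↑𝒰 : Filter (ℂˣ × S)) ≤ 𝓝 (t, y.2) := by
    have := hT.prodMk_nhds hy2
    exact tendsto_id'.mp this
  refine ⟨(t, y.2), ?_, hle⟩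
  have hlim : Tendsto (fun p : ℂˣ × S => (p.1 • p.2 : S)) ↑𝒰 (𝓝 (t • y.2)) :=
    (hcS.tendsto (t, y.2)).comp hle
  have : t • y.2 = y.1 := tendsto_nhds_unique hlim hy1
  rw [Prod.ext_iff]
  exact ⟨this, rfl⟩
end

section
/- The diagonal ℂ*-action on W is proper; that is, the map ℂ* × W → W × W sending (t, p) to (t • p, p) is a proper map. -/
/-- The `ℂˣ`-invariant open set `W = (X × ℂ) \ (h⁻¹(0) × {0})`, for the diagonal action
`t • (x, z) = (t • x, t z)`; invariance follows from the homogeneity of `h`. -/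
def symplecticCutSubMulAction {X : Type*} [MulAction ℂˣ X] {n : ℕ}
    (h : X → Fin n → ℂ) (d : Fin n → ℕ)
    (hhom : ∀ (t : ℂˣ) (x : X) (j : Fin n), h (t • x) j = (t : ℂ) ^ d j * h x j) :
    SubMulAction ℂˣ (X × ℂ) where
  carrier := ((h ⁻¹' {0}) ×ˢ ({0} : Set ℂ))ᶜ
  smul_mem' := by
    intro t p hp hmem
    apply hp
    rw [Set.mem_prod] at hmem
    obtain ⟨h1, h2⟩ := hmem
    rw [Set.mem_prod]
    constructor
    · simp only [Set.mem_preimage, Set.mem_singleton_iff] at h1 ⊢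
      funext j
      have hj := hhom t p.1 j
      have hfst : (t • p).1 = t • p.1 := rfl
      rw [hfst] at h1
      rw [h1] at hj
      simp only [Pi.zero_apply] at hj
      rcases mul_eq_zero.mp hj.symm with h3 | h4
      · exact absurd h3 (pow_ne_zero _ t.ne_zero)
      · exact h4
    · simp only [Set.mem_singleton_iff] at h2 ⊢
      have hsnd : (t • p).2 = (t : ℂ) * p.2 := rfl
      rw [hsnd] at h2
      rcases mul_eq_zero.mp h2 with h3 | h4
      · exact absurd h3 t.ne_zero
      · exact h4

theorem key_growth {X : Type*} [MulAction ℂˣ X] {n : ℕ}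
    (h : X → Fin n → ℂ) (d : Fin n → ℕ) (hd : ∀ j, 1 ≤ d j)
    (hhom : ∀ (t : ℂˣ) (x : X) (j : Fin n), h (t • x) j = (t : ℂ) ^ d j * h x j)
    (t : ℂˣ) (ht : 1 ≤ ‖(t : ℂ)‖) (p : X × ℂ) :
    ‖(t : ℂ)‖ * max ‖h p.1‖ ‖p.2‖ ≤ max ‖h (t • p).1‖ ‖(t • p).2‖ := by
  have htpos : (0:ℝ) ≤ ‖(t : ℂ)‖ := norm_nonneg _
  rw [mul_max_of_nonneg _ _ htpos]
  apply max_le_max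
  · have h1 : ∀ j, ‖(t:ℂ)‖ * ‖h p.1 j‖ ≤ ‖h (t • p.1) j‖ := by
      intro j
      rw [hhom t p.1 j, norm_mul, norm_pow]
      apply mul_le_mul_of_nonneg_right _ (norm_nonneg _)
      exact le_self_pow₀ ht (by have := hd j; omega : d j ≠ 0)
    have h2 : ‖(t:ℂ) • h p.1‖ ≤ ‖h (t • p.1)‖ := by
      rw [pi_norm_le_iff_of_nonneg (norm_nonneg _)]
      intro j
      calc ‖((t:ℂ) • h p.1) j‖ = ‖(t:ℂ)‖ * ‖h p.1 j‖ := by simp [norm_smul]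
        _ ≤ ‖h (t • p.1) j‖ := h1 j
        _ ≤ ‖h (t • p.1)‖ := norm_le_pi_norm _ j
    rwa [norm_smul] at h2
  · have : (t • p).2 = (t : ℂ) * p.2 := rfl
    rw [this, norm_mul]

set_option synthInstance.maxHeartbeats 1000000 in
/-- With `X` metrizable carrying a continuous `ℂˣ`-action, `h : X → ℂⁿ`
continuous, proper and homogeneous of degrees `d j ≥ 1`, the diagonal `ℂˣ`-action on
`W = (X × ℂ) \ (h⁻¹(0) × {0})` is proper: `(t, p) ↦ (t • p, p)` is a proper map
`ℂˣ × W → W × W`. -/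
theorem cstar_action_on_cut_space_proper
    {X : Type*} [TopologicalSpace X] [TopologicalSpace.MetrizableSpace X]
    [MulAction ℂˣ X] [ContinuousSMul ℂˣ X]
    {n : ℕ} (h : X → Fin n → ℂ) (hcont : Continuous h)
    (hproper : ∀ K : Set (Fin n → ℂ), IsCompact K → IsCompact (h ⁻¹' K))
    (d : Fin n → ℕ) (hd : ∀ j, 1 ≤ d j)
    (hhom : ∀ (t : ℂˣ) (x : X) (j : Fin n), h (t • x) j = (t : ℂ) ^ d j * h x j) :
    IsProperMap (fun p : ℂˣ × (symplecticCutSubMulAction h d hhom) =>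
      ((p.1 • p.2, p.2) :
        (symplecticCutSubMulAction h d hhom) × (symplecticCutSubMulAction h d hhom))) := by
  classical
  set W := symplecticCutSubMulAction h d hhom with hWdef
  have hcontf : Continuous (fun p : ℂˣ × W => ((p.1 • p.2, p.2) : W × W)) :=
    (continuous_fst.smul continuous_snd).prodMk continuous_snd
  haveI : FirstCountableTopology ↥W :=
    Topology.IsEmbedding.subtypeVal.firstCountableTopology
  rw [isProperMap_iff_isCompact_preimage]
  refine ⟨hcontf, fun K hK => ?_⟩
  rcases K.eq_empty_or_nonempty with hKe | hKne
  · simp [hKe]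
  -- the norm function
  set N : X × ℂ → ℝ := fun p => max ‖h p.1‖ ‖p.2‖ with hNdef
  have hNcont : Continuous N := ((hcont.comp continuous_fst).norm).max continuous_snd.norm
  have hNpos : ∀ p : W, 0 < N (p : X × ℂ) := by
    rintro ⟨p, hp⟩
    have hp' : p ∉ (h ⁻¹' {0}) ×ˢ ({0} : Set ℂ) := hp
    by_contra hle
    push_neg at hle
    have h1 : ‖h p.1‖ ≤ 0 := le_trans (le_max_left _ _) hle
    have h2 : ‖p.2‖ ≤ 0 := le_trans (le_max_right _ _) hle
    exact hp' (Set.mem_prod.mpr ⟨by simpa using norm_le_zero_iff.mp h1,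
      by simpa using norm_le_zero_iff.mp h2⟩)
  -- the compact set of values
  set K₁ : Set W := (Prod.fst '' K) ∪ (Prod.snd '' K) with hK₁def
  have hK₁ : IsCompact K₁ := (hK.image continuous_fst).union (hK.image continuous_snd)
  obtain ⟨q0, hq0⟩ := hKne
  have hK₁ne : K₁.Nonempty := ⟨q0.1, Or.inl ⟨q0, hq0, rfl⟩⟩
  have hNW : Continuous fun q : W => N (q : X × ℂ) := hNcont.comp continuous_subtype_val
  obtain ⟨a, haK, hamin⟩ := hK₁.exists_isMinOn hK₁ne hNW.continuousOn
  obtain ⟨b, hbK, hbmax⟩ := hK₁.exists_isMaxOn hK₁ne hNW.continuousOn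
  set ε : ℝ := N (a : X × ℂ) with hεdef
  set M : ℝ := N (b : X × ℂ) with hMdef
  have hε : 0 < ε := hNpos a
  have hM : 0 < M := hNpos b
  have hεM : ε ≤ M := hbmax haK
  have hlow : ∀ q ∈ K₁, ε ≤ N (q : X × ℂ) := fun q hq => hamin hq
  have hhigh : ∀ q ∈ K₁, N (q : X × ℂ) ≤ M := fun q hq => hbmax hq
  -- the annulus
  set A : Set ℂˣ := {t : ℂˣ | ε / M ≤ ‖(t : ℂ)‖ ∧ ‖(t : ℂ)‖ ≤ M / ε} with hAdef
  have hA : IsCompact A := by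
    rw [(Units.isEmbedding_val₀ (G₀ := ℂ)).isCompact_iff]
    have himg : Units.val '' A = {z : ℂ | ε / M ≤ ‖z‖ ∧ ‖z‖ ≤ M / ε} := by
      ext z
      constructor
      · rintro ⟨t, ht, rfl⟩; exact ht
      · rintro ⟨h1, h2⟩
        have hz : z ≠ 0 := by
          intro h0
          rw [h0, norm_zero] at h1
          exact absurd h1 (not_le.mpr (div_pos hε hM))
        exact ⟨Units.mk0 z hz, ⟨h1, h2⟩, rfl⟩
    rw [himg]
    refine IsCompact.of_isClosed_subset (isCompact_closedBall (0 : ℂ) (M / ε)) ?_ ?_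
    · exact (isClosed_le continuous_const continuous_norm).inter
        (isClosed_le continuous_norm continuous_const)
    · intro z hz
      exact mem_closedBall_zero_iff.mpr hz.2
  -- the subset claim
  have hsub : (fun p : ℂˣ × W => ((p.1 • p.2, p.2) : W × W)) ⁻¹' K ⊆
      A ×ˢ (Prod.snd '' K) := by
    rintro ⟨t, p⟩ hmem
    rw [Set.mem_preimage] at hmem
    have h1 : t • p ∈ K₁ := Or.inl ⟨_, hmem, rfl⟩
    have h2 : p ∈ K₁ := Or.inr ⟨_, hmem, rfl⟩
    refine Set.mem_prod.mpr ⟨?_, ⟨_, hmem, rfl⟩⟩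
    have hval : ((t • p : W) : X × ℂ) = t • (p : X × ℂ) := rfl
    rcases le_total 1 ‖(t : ℂ)‖ with hu | hu
    · have hkey := key_growth h d hd hhom t hu (p : X × ℂ)
      rw [← hval] at hkey
      have hb1 : ‖(t : ℂ)‖ * ε ≤ M := by
        calc ‖(t : ℂ)‖ * ε ≤ ‖(t : ℂ)‖ * N (p : X × ℂ) :=
              mul_le_mul_of_nonneg_left (hlow p h2) (norm_nonneg _)
          _ ≤ N ((t • p : W) : X × ℂ) := hkey
          _ ≤ M := hhigh _ h1
      constructor
      · calc ε / M ≤ 1 := (div_le_one hM).mpr hεM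
          _ ≤ ‖(t : ℂ)‖ := hu
      · rw [le_div_iff₀ hε]; linarith [hb1]
    · have hinv : ‖((t⁻¹ : ℂˣ) : ℂ)‖ = ‖(t : ℂ)‖⁻¹ := by
        rw [← norm_inv]
        congr 1
        exact Units.val_inv_eq_inv_val t
      have hupos : 0 < ‖(t : ℂ)‖ := norm_pos_iff.mpr t.ne_zero
      have hu' : 1 ≤ ‖((t⁻¹ : ℂˣ) : ℂ)‖ := by
        rw [hinv]
        exact (one_le_inv₀ hupos).mpr hu
      have hkey := key_growth h d hd hhom t⁻¹ hu' ((t • p : W) : X × ℂ)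
      have hback : t⁻¹ • ((t • p : W) : X × ℂ) = (p : X × ℂ) := by
        rw [hval, inv_smul_smul]
      rw [hback] at hkey
      have hb1 : ‖(t : ℂ)‖⁻¹ * ε ≤ M := by
        calc ‖(t : ℂ)‖⁻¹ * ε
            ≤ ‖((t⁻¹ : ℂˣ) : ℂ)‖ * N ((t • p : W) : X × ℂ) := by
              rw [hinv]
              exact mul_le_mul_of_nonneg_left (hlow _ h1) (by positivity)
          _ ≤ N (p : X × ℂ) := hkey
          _ ≤ M := hhigh _ h2
      constructor
      · rw [div_le_iff₀ hM]
        have h3 : ‖(t : ℂ)‖⁻¹ * ε ≤ M := hb1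
        have h4 : ε ≤ M * ‖(t : ℂ)‖ := by
          have h5 := mul_le_mul_of_nonneg_right h3 hupos.le
          calc ε = ‖(t : ℂ)‖⁻¹ * ε * ‖(t : ℂ)‖ := by field_simp
            _ ≤ M * ‖(t : ℂ)‖ := h5
        linarith
      · calc ‖(t : ℂ)‖ ≤ 1 := hu
          _ ≤ M / ε := (one_le_div hε).mpr hεM
  exact IsCompact.of_isClosed_subset (hA.prod (hK.image continuous_snd))
    ((hK.isClosed).preimage hcontf) hsub
end

section
/- W = ℂ* • f̃^{-1}(c), i.e. every point of W is of the form t • p with t ∈ ℂ* and f̃(p) = c, and every such point lies in W. Moreover, W coincides with the set of semistable points of X × ℂ, namely W = {p ∈ X × ℂ : the closure of the orbit ℂ* • p meets f̃^{-1}(c)}. -/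
noncomputable def eu (t : ℝ) : ℂˣ := Units.mk0 (Complex.exp t) (Complex.exp_ne_zero t)

lemma eu_val (t : ℝ) : (eu t : ℂ) = Complex.exp t := rfl

lemma continuous_eu : Continuous eu := by
  apply Units.continuous_iff.mpr
  constructor
  · exact Complex.continuous_exp.comp Complex.continuous_ofReal
  · have key : ∀ t : ℝ, ((eu t)⁻¹ : ℂ) = Complex.exp (-(t:ℂ)) := by
      intro t; simp [eu, ← Complex.exp_neg]
    have : (fun t : ℝ => ((eu t)⁻¹ : ℂ)) = fun t : ℝ => Complex.exp (-(t:ℂ)) :=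
      funext key
    exact this ▸ Complex.continuous_exp.comp Complex.continuous_ofReal.neg

lemma abs_eu (t : ℝ) : ‖(eu t : ℂ)‖ = Real.exp t := by
  simp [eu_val, Complex.norm_exp]

open Filter Topology

lemma exists_cut {X : Type*} [TopologicalSpace X] [TopologicalSpace.MetrizableSpace X]
    [MulAction ℂˣ X] [ContinuousSMul ℂˣ X]
    {n : ℕ} (h : X → Fin n → ℂ) (hcont : Continuous h)
    (hproper : ∀ K : Set (Fin n → ℂ), IsCompact K → IsCompact (h ⁻¹' K))
    (d : Fin n → ℕ) (hd : ∀ j, 1 ≤ d j)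
    (hhom : ∀ (t : ℂˣ) (x : X) (j : Fin n), h (t • x) j = (t : ℂ) ^ d j * h x j)
    (f : X → ℝ) (hf : Continuous f)
    (hfproper : ∀ K : Set ℝ, IsCompact K → IsCompact (f ⁻¹' K))
    (hfle : ∀ x, f x ≤ 0) (c : ℝ) (hc : c < 0)
    (hcf : ∀ x, h x = 0 → c < f x)
    (x : X) (z : ℂ) (hxz : h x ≠ 0 ∨ z ≠ 0) :
    ∃ t : ℝ, f (eu t • x) - (Real.exp t * ‖z‖) ^ 2 / 2 = c := by
  set G : ℝ → ℝ := fun t => f (eu t • x) - (Real.exp t * ‖z‖) ^ 2 / 2 with hG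
  have hGcont : Continuous G :=
    (hf.comp (continuous_eu.smul continuous_const)).sub
      (((Real.continuous_exp.mul continuous_const).pow 2).div_const 2)
  have habs : ∀ (t : ℝ) (j : Fin n),
      ‖h (eu t • x) j‖ = Real.exp t ^ d j * ‖h x j‖ := by
    intro t j
    rw [hhom, norm_mul, norm_pow, eu_val, Complex.norm_exp, Complex.ofReal_re]
  -- low side : ∃ t₀, c < G t₀
  have low : ∃ t₀, c < G t₀ := by
    have hmemK : ∀ t : ℝ, t ≤ 0 → eu t • x ∈ h ⁻¹' Metric.closedBall 0 ‖h x‖ := by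
      intro t ht
      simp only [Set.mem_preimage, mem_closedBall_zero_iff]
      rw [pi_norm_le_iff_of_nonneg (norm_nonneg _)]
      intro j
      rw [habs t j]
      have he1 : Real.exp t ≤ 1 := by simpa using Real.exp_le_exp.mpr ht
      calc Real.exp t ^ d j * ‖h x j‖
          ≤ 1 * ‖h x j‖ := by
            apply mul_le_mul_of_nonneg_right _ (norm_nonneg _)
            exact pow_le_one₀ (Real.exp_pos t).le he1
        _ = ‖h x j‖ := one_mul _
        _ ≤ ‖h x‖ := by exact norm_le_pi_norm (h x) j
    have hK : IsCompact (h ⁻¹' Metric.closedBall 0 ‖h x‖) :=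
      hproper _ (isCompact_closedBall 0 _)
    set u : ℕ → X := fun k => eu (-(k : ℝ) - 1) • x with hu
    have humem : ∀ k, u k ∈ h ⁻¹' Metric.closedBall 0 ‖h x‖ := by
      intro k
      exact hmemK _ (by have : (0:ℝ) ≤ (k:ℝ) := Nat.cast_nonneg k; linarith)
    obtain ⟨y, hyK, φ, hφ, hconv⟩ := hK.isSeqCompact humem
    have hbot : Tendsto (fun k : ℕ => -(k : ℝ) - 1) atTop atBot := by
      apply tendsto_atBot_add_const_right
      exact tendsto_neg_atBot_iff.mpr tendsto_natCast_atTop_atTop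
    have hexp0 : Tendsto (fun k : ℕ => Real.exp (-(k : ℝ) - 1)) atTop (𝓝 0) :=
      Real.tendsto_exp_atBot.comp hbot
    have hh0 : Tendsto (fun k => h (u k)) atTop (𝓝 0) := by
      rw [tendsto_pi_nhds]
      intro j
      have heq : ∀ k : ℕ, h (u k) j = ((Real.exp (-(k : ℝ) - 1) : ℝ) : ℂ) ^ d j * h x j := by
        intro k
        rw [hu]
        rw [hhom, eu_val, Complex.ofReal_exp]
      simp only [heq]
      have : Tendsto (fun k : ℕ => ((Real.exp (-(k : ℝ) - 1) : ℝ) : ℂ) ^ d j * h x j)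
          atTop (𝓝 (((0:ℝ):ℂ) ^ d j * h x j)) :=
        ((((Complex.continuous_ofReal.tendsto 0).comp hexp0)).pow (d j)).mul_const _
      simpa [zero_pow (Nat.one_le_iff_ne_zero.mp (hd j))] using this
    have hhy : h y = 0 :=
      tendsto_nhds_unique ((hcont.tendsto y).comp hconv) (hh0.comp hφ.tendsto_atTop)
    have hfy : c < f y := hcf y hhy
    have hGconv : Tendsto (fun k => G (-(φ k : ℝ) - 1)) atTop (𝓝 (f y)) := by
      have h1 : Tendsto (fun k => f (u (φ k))) atTop (𝓝 (f y)) := (hf.tendsto y).comp hconv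
      have hexp0' : Tendsto (fun k : ℕ => Real.exp (-(φ k : ℝ) - 1)) atTop (𝓝 0) :=
        hexp0.comp hφ.tendsto_atTop
      have h2 : Tendsto (fun k : ℕ => (Real.exp (-(φ k : ℝ) - 1) * ‖z‖) ^ 2 / 2)
          atTop (𝓝 (((0 : ℝ) * ‖z‖) ^ 2 / 2)) :=
        ((hexp0'.mul_const _).pow 2).div_const 2
      have := h1.sub h2
      simpa [hG, hu] using this
    obtain ⟨k₀, hk₀⟩ := (hGconv.eventually (eventually_gt_nhds hfy)).exists
    exact ⟨_, hk₀⟩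
  -- high side : ∃ t₁, G t₁ < c
  have high : ∃ t₁, G t₁ < c := by
    rcases hxz with hx | hz
    · obtain ⟨j, hj⟩ := Function.ne_iff.mp hx
      have hjpos : 0 < ‖h x j‖ := by simpa using hj
      obtain ⟨M, hM⟩ := (hfproper _ (isCompact_Icc (a := c) (b := 0))).exists_bound_of_continuousOn
        hcont.continuousOn
      have hev : ∀ᶠ t : ℝ in atTop, M < Real.exp t * ‖h x j‖ :=
        (Real.tendsto_exp_atTop.atTop_mul_const hjpos).eventually_gt_atTop M
      obtain ⟨t₁, ht₁M, ht₁0⟩ := (hev.and (eventually_ge_atTop (0:ℝ))).exists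
      have hpow : Real.exp t₁ ≤ Real.exp t₁ ^ d j := by
        calc Real.exp t₁ = Real.exp t₁ ^ 1 := (pow_one _).symm
          _ ≤ Real.exp t₁ ^ d j := by
              apply pow_le_pow_right₀ _ (hd j)
              simpa using Real.exp_le_exp.mpr ht₁0
      have hbig : M < ‖h (eu t₁ • x)‖ := by
        have h1 : M < ‖h (eu t₁ • x) j‖ := by
          rw [habs]
          calc M < Real.exp t₁ * ‖h x j‖ := ht₁M
            _ ≤ Real.exp t₁ ^ d j * ‖h x j‖ :=
              mul_le_mul_of_nonneg_right hpow (norm_nonneg _)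
        calc M < ‖h (eu t₁ • x) j‖ := h1
          _ = ‖h (eu t₁ • x) j‖ := rfl
          _ ≤ ‖h (eu t₁ • x)‖ := norm_le_pi_norm _ j
      have hnot : eu t₁ • x ∉ f ⁻¹' Set.Icc c 0 := by
        intro hmem
        exact absurd (hM _ hmem) (not_le.mpr hbig)
      have hflt : f (eu t₁ • x) < c := by
        simp only [Set.mem_preimage, Set.mem_Icc, not_and_or, not_le] at hnot
        rcases hnot with h' | h'
        · exact h'
        · exact absurd (hfle _) (not_le.mpr h')
      refine ⟨t₁, ?_⟩
      have : (Real.exp t₁ * ‖z‖) ^ 2 / 2 ≥ 0 := by positivity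
      rw [hG]; dsimp only; linarith
    · have hzpos : 0 < ‖z‖ := by simpa using hz
      obtain ⟨t₁, ht₁⟩ := ((Real.tendsto_exp_atTop.atTop_mul_const hzpos).eventually_gt_atTop
        (max 1 (-2 * c))).exists
      have h1 : (1 : ℝ) < Real.exp t₁ * ‖z‖ := lt_of_le_of_lt (le_max_left _ _) ht₁
      have h2 : -2 * c < Real.exp t₁ * ‖z‖ := lt_of_le_of_lt (le_max_right _ _) ht₁
      have h3 : -2 * c < (Real.exp t₁ * ‖z‖) ^ 2 := by nlinarith
      have h4 := hfle (eu t₁ • x)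
      refine ⟨t₁, ?_⟩
      rw [hG]; dsimp only; linarith
  obtain ⟨t₀, ht₀⟩ := low
  obtain ⟨t₁, ht₁⟩ := high
  have hmem : c ∈ Set.uIcc (G t₀) (G t₁) := Set.mem_uIcc.mpr (Or.inr ⟨ht₁.le, ht₀.le⟩)
  obtain ⟨t, _, htG⟩ := intermediate_value_uIcc hGcont.continuousOn hmem
  exact ⟨t, htG⟩


set_option synthInstance.maxHeartbeats 1000000 in
/-- With `X` metrizable carrying a continuous `ℂˣ`-action, `h : X → ℂⁿ`
continuous, proper, homogeneous of degrees `d j ≥ 1`, `f : X → ℝ` continuous, proper,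
nonpositive, `c < 0` with `f x > c` whenever `h x = 0`, and
`f̃ (x, z) = f x - |z|²/2` on `X × ℂ` (with the diagonal `ℂˣ`-action
`t • (x, z) = (t • x, t z)`), the set `W = (X × ℂ) \ (h⁻¹(0) × {0})` satisfies
`W = ℂˣ • f̃⁻¹(c)` and `W` equals the set of semistable points, i.e. the points whose
`ℂˣ`-orbit closure meets `f̃⁻¹(c)`. -/
theorem cut_space_eq_saturation_eq_semistable
    {X : Type*} [TopologicalSpace X] [TopologicalSpace.MetrizableSpace X]
    [MulAction ℂˣ X] [ContinuousSMul ℂˣ X]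
    {n : ℕ} (h : X → Fin n → ℂ) (hcont : Continuous h)
    (hproper : ∀ K : Set (Fin n → ℂ), IsCompact K → IsCompact (h ⁻¹' K))
    (d : Fin n → ℕ) (hd : ∀ j, 1 ≤ d j)
    (hhom : ∀ (t : ℂˣ) (x : X) (j : Fin n), h (t • x) j = (t : ℂ) ^ d j * h x j)
    (f : X → ℝ) (hf : Continuous f)
    (hfproper : ∀ K : Set ℝ, IsCompact K → IsCompact (f ⁻¹' K))
    (hfle : ∀ x, f x ≤ 0) (c : ℝ) (hc : c < 0)
    (hcf : ∀ x, h x = 0 → c < f x) :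
    (((h ⁻¹' {0}) ×ˢ ({0} : Set ℂ))ᶜ =
        {p : X × ℂ | ∃ (t : ℂˣ) (q : X × ℂ),
          f q.1 - ‖q.2‖ ^ 2 / 2 = c ∧ p = t • q}) ∧
    (((h ⁻¹' {0}) ×ˢ ({0} : Set ℂ))ᶜ =
        {p : X × ℂ | (closure (MulAction.orbit ℂˣ p) ∩
          {q : X × ℂ | f q.1 - ‖q.2‖ ^ 2 / 2 = c}).Nonempty}) := by
  have key := exists_cut h hcont hproper d hd hhom f hf hfproper hfle c hc hcf
  -- if h q.1 = 0 and q.2 = 0 then f̃ q ≠ c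
  have hZnotc : ∀ q : X × ℂ, h q.1 = 0 → q.2 = 0 →
      f q.1 - ‖q.2‖ ^ 2 / 2 ≠ c := by
    intro q hq1 hq2 hqc
    have := hcf q.1 hq1
    rw [hq2] at hqc
    simp at hqc
    linarith
  -- orbit of a point of Z stays in Z
  have hZinv : ∀ (t : ℂˣ) (q : X × ℂ), h q.1 = 0 → q.2 = 0 →
      h (t • q).1 = 0 ∧ (t • q).2 = 0 := by
    intro t q hq1 hq2
    constructor
    · funext j
      have : (t • q).1 = t • q.1 := rfl
      rw [this, hhom]
      simp [funext_iff.mp hq1 j]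
    · have : (t • q).2 = (t : ℂ) * q.2 := rfl
      rw [this, hq2, mul_zero]
  have part1 : ((h ⁻¹' {0}) ×ˢ ({0} : Set ℂ))ᶜ =
      {p : X × ℂ | ∃ (t : ℂˣ) (q : X × ℂ),
        f q.1 - ‖q.2‖ ^ 2 / 2 = c ∧ p = t • q} := by
    ext p
    simp only [Set.mem_compl_iff, Set.mem_prod, Set.mem_preimage, Set.mem_singleton_iff,
      Set.mem_setOf_eq, not_and_or]
    constructor
    · intro hp
      obtain ⟨t, ht⟩ := key p.1 p.2 hp
      refine ⟨(eu t)⁻¹, eu t • p, ?_, (inv_smul_smul _ _).symm⟩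
      have h1 : (eu t • p).1 = eu t • p.1 := rfl
      have h2 : (eu t • p).2 = Complex.exp t * p.2 := rfl
      rw [h1, h2, norm_mul, Complex.norm_exp, Complex.ofReal_re]
      simpa [mul_pow] using ht
    · rintro ⟨t, q, hqc, rfl⟩
      by_contra hcon
      push_neg at hcon
      obtain ⟨hp1, hp2⟩ := hcon
      have hq1 : h q.1 = 0 := by
        funext j
        have h1 : (t • q).1 = t • q.1 := rfl
        rw [h1] at hp1
        have := funext_iff.mp hp1 j
        rw [hhom] at this
        have htne : ((t : ℂ)) ^ d j ≠ 0 := pow_ne_zero _ t.ne_zero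
        simpa [htne] using this
      have hq2 : q.2 = 0 := by
        have h2 : (t • q).2 = (t : ℂ) * q.2 := rfl
        rw [h2] at hp2
        simpa [t.ne_zero] using hp2
      exact hZnotc q hq1 hq2 hqc
  have hZclosed : IsClosed ((h ⁻¹' {0}) ×ˢ ({0} : Set ℂ)) :=
    (IsClosed.preimage hcont isClosed_singleton).prod isClosed_singleton
  refine ⟨part1, ?_⟩
  ext p
  simp only [Set.mem_setOf_eq]
  constructor
  · intro hp
    rw [part1] at hp
    obtain ⟨t, q, hqc, hpq⟩ := hp
    refine ⟨q, ⟨subset_closure ⟨t⁻¹, ?_⟩, hqc⟩⟩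
    simp [hpq]
  · rintro ⟨q, hqcl, hqc⟩
    simp only [Set.mem_compl_iff]
    intro hpZ
    rw [Set.mem_prod, Set.mem_preimage, Set.mem_singleton_iff, Set.mem_singleton_iff] at hpZ
    have horb : MulAction.orbit ℂˣ p ⊆ (h ⁻¹' {0}) ×ˢ ({0} : Set ℂ) := by
      rintro _ ⟨t, rfl⟩
      obtain ⟨hq1, hq2⟩ := hZinv t p hpZ.1 hpZ.2
      exact ⟨hq1, hq2⟩
    have hcl : closure (MulAction.orbit ℂˣ p) ⊆ (h ⁻¹' {0}) ×ˢ ({0} : Set ℂ) :=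
      hZclosed.closure_subset_iff.mpr horb
    have hqZ := hcl hqcl
    rw [Set.mem_prod, Set.mem_preimage, Set.mem_singleton_iff, Set.mem_singleton_iff] at hqZ
    exact hZnotc q hqZ.1 hqZ.2 hqc
end

section
/- For all x, y ∈ Y, the closures of the orbits G • x and G • y intersect if and only if r(x) and r(y) lie in the same G-orbit. -/
/-- Let `G` act on a topological space `Y` by homeomorphisms, let
`P ⊆ Y` and let `r : Y → Y` satisfy: (a) `r y` lies in the closure of the orbit `G • y`;
(b) `r y ∈ P`; (c) any two points of `P` in the closure of a single orbit `G • y` lie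
in the same `G`-orbit. Then for all `x, y ∈ Y`, the closures of `G • x` and `G • y`
intersect if and only if `r x` and `r y` lie in the same `G`-orbit. -/
theorem orbitClosures_intersect_iff_retract_in_same_orbit
    {Y : Type*} [TopologicalSpace Y] {G : Type*} [Group G] [MulAction G Y]
    (hg : ∀ g : G, Continuous fun y : Y => g • y)
    (P : Set Y) (r : Y → Y)
    (ha : ∀ y : Y, r y ∈ closure (MulAction.orbit G y))
    (hb : ∀ y : Y, r y ∈ P)
    (hc : ∀ y : Y, ∀ p ∈ P, ∀ q ∈ P, p ∈ closure (MulAction.orbit G y) →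
      q ∈ closure (MulAction.orbit G y) → ∃ g : G, g • p = q)
    (x y : Y) :
    (closure (MulAction.orbit G x) ∩ closure (MulAction.orbit G y)).Nonempty ↔
      r y ∈ MulAction.orbit G (r x) := by
  have key : ∀ (w : Y) (g : G) (z : Y), z ∈ closure (MulAction.orbit G w) →
      g • z ∈ closure (MulAction.orbit G w) := by
    intro w g z hz
    refine map_mem_closure (hg g) hz ?_
    rintro _ ⟨h, rfl⟩
    exact ⟨g * h, by simp [mul_smul]⟩
  constructor
  · rintro ⟨z, hzx, hzy⟩
    have horb : ∀ w : Y, z ∈ closure (MulAction.orbit G w) →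
        closure (MulAction.orbit G z) ⊆ closure (MulAction.orbit G w) := by
      intro w hz
      refine closure_minimal ?_ isClosed_closure
      rintro _ ⟨g, rfl⟩
      exact key w g z hz
    have hrzx := horb x hzx (ha z)
    have hrzy := horb y hzy (ha z)
    obtain ⟨g1, hg1⟩ := hc x (r x) (hb x) (r z) (hb z) (ha x) hrzx
    obtain ⟨g2, hg2⟩ := hc y (r z) (hb z) (r y) (hb y) hrzy (ha y)
    exact ⟨g2 * g1, by simp only [mul_smul, hg1, hg2]⟩
  · rintro ⟨g, hgr⟩
    refine ⟨r y, ?_, ha y⟩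
    rw [← hgr]
    exact key x g (r x) (ha x)
end

section
/- The relation x ~ y defined by 'the closures of G • x and G • y intersect' is an equivalence relation on Y, and the inclusion P ↪ Y induces a homeomorphism from the orbit space P/G onto the quotient space Y/~ (both with the quotient topology), whose inverse is the map induced by r. -/
/-- The relation on `Y`: the closures of the `G`-orbits of the two points intersect
(abstracting S-equivalence of semistable Higgs bundles). -/
def orbitClosureRel (G : Type*) [Group G] (Y : Type*) [TopologicalSpace Y]
    [MulAction G Y] (x y : Y) : Prop :=
  (closure (MulAction.orbit G x) ∩ closure (MulAction.orbit G y)).Nonempty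

/-- Let `G` act on a topological space `Y` by homeomorphisms, `P ⊆ Y`
a `G`-invariant subset and `r : Y → Y` continuous with: `r y` in the closure of `G • y`,
`r y ∈ P`, any two points of `P` in the closure of one orbit are in the same orbit, and
`r p ∈ G • p` for `p ∈ P`. Then the relation "orbit closures intersect" is an equivalence
relation `~` on `Y`, and the inclusion `P ↪ Y` induces a homeomorphism `P/G ≃ₜ Y/~`
(both with the quotient topology) whose inverse is induced by `r`. -/
theorem moduli_homeomorph_sEquivalence_quotient
    {Y : Type*} [TopologicalSpace Y] {G : Type*} [Group G] [MulAction G Y]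
    (hg : ∀ g : G, Continuous fun y : Y => g • y)
    (P : Set Y) (r : Y → Y)
    (ha : ∀ y : Y, r y ∈ closure (MulAction.orbit G y))
    (hb : ∀ y : Y, r y ∈ P)
    (hc : ∀ y : Y, ∀ p ∈ P, ∀ q ∈ P, p ∈ closure (MulAction.orbit G y) →
      q ∈ closure (MulAction.orbit G y) → ∃ g : G, g • p = q)
    (hPinv : ∀ g : G, ∀ p ∈ P, g • p ∈ P)
    (hr : Continuous r)
    (hrP : ∀ p ∈ P, r p ∈ MulAction.orbit G p) :
    ∃ hequiv : Equivalence (orbitClosureRel G Y),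
      ∃ e : Quotient (Setoid.comap (Subtype.val : P → Y) (MulAction.orbitRel G Y)) ≃ₜ
            Quotient (Setoid.mk (orbitClosureRel G Y) hequiv),
        (∀ p : P,
          e (Quotient.mk (Setoid.comap (Subtype.val : P → Y) (MulAction.orbitRel G Y)) p)
            = Quotient.mk (Setoid.mk (orbitClosureRel G Y) hequiv) (p : Y)) ∧
        (∀ y : Y,
          e.symm (Quotient.mk (Setoid.mk (orbitClosureRel G Y) hequiv) y)
            = Quotient.mk (Setoid.comap (Subtype.val : P → Y) (MulAction.orbitRel G Y))
                (⟨r y, hb y⟩ : P)) := by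
  classical
  -- closure of an orbit is G-invariant
  have hinv : ∀ (g : G) (x z : Y), z ∈ closure (MulAction.orbit G x) →
      g • z ∈ closure (MulAction.orbit G x) := by
    intro g x z hz
    have h1 : g • z ∈ (fun y => g • y) '' closure (MulAction.orbit G x) :=
      ⟨z, hz, rfl⟩
    have h2 := image_closure_subset_closure_image (hg g) (s := MulAction.orbit G x)
    have h3 : (fun y => g • y) '' MulAction.orbit G x = MulAction.orbit G x := by
      ext w
      constructor
      · rintro ⟨v, ⟨h, rfl⟩, rfl⟩
        exact ⟨g * h, by simp [mul_smul]⟩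
      · rintro ⟨h, rfl⟩
        exact ⟨g⁻¹ • (h • x), ⟨g⁻¹ * h, by simp [mul_smul]⟩, by simp [smul_smul]⟩
    have := h2 h1
    rwa [h3] at this
  have horbsub : ∀ x z : Y, z ∈ closure (MulAction.orbit G x) →
      closure (MulAction.orbit G z) ⊆ closure (MulAction.orbit G x) := by
    intro x z hz
    apply closure_minimal _ isClosed_closure
    rintro w ⟨g, rfl⟩
    exact hinv g x z hz
  -- key: if z ∈ closure (orbit x) then r z and r x are in the same G-orbit
  have hkey : ∀ x z : Y, z ∈ closure (MulAction.orbit G x) → ∃ g : G, g • r x = r z := by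
    intro x z hz
    exact hc x (r x) (hb x) (r z) (hb z) (ha x) (horbsub x z hz (ha z))
  -- characterization of the relation
  have hiff : ∀ x y : Y, orbitClosureRel G Y x y ↔ ∃ g : G, g • r x = r y := by
    intro x y
    constructor
    · rintro ⟨z, hzx, hzy⟩
      obtain ⟨g, hgx⟩ := hkey x z hzx
      obtain ⟨g', hgy⟩ := hkey y z hzy
      exact ⟨g'⁻¹ * g, by rw [mul_smul, hgx, ← hgy, inv_smul_smul]⟩
    · rintro ⟨g, hgxy⟩
      exact ⟨r y, by rw [← hgxy]; exact hinv g x (r x) (ha x), ha y⟩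
  have hequiv : Equivalence (orbitClosureRel G Y) := by
    constructor
    · intro x; exact ⟨r x, ha x, ha x⟩
    · rintro x y ⟨z, h1, h2⟩; exact ⟨z, h2, h1⟩
    · intro x y z hxy hyz
      obtain ⟨g, hg1⟩ := (hiff x y).1 hxy
      obtain ⟨g', hg2⟩ := (hiff y z).1 hyz
      exact (hiff x z).2 ⟨g' * g, by rw [mul_smul, hg1, hg2]⟩
  refine ⟨hequiv, ?_⟩
  set s1 := Setoid.comap (Subtype.val : P → Y) (MulAction.orbitRel G Y) with hs1
  set s2 := Setoid.mk (orbitClosureRel G Y) hequiv with hs2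
  -- forward map
  have wd1 : ∀ p q : P, s1.r p q →
      Quotient.mk s2 (p : Y) = Quotient.mk s2 (q : Y) := by
    rintro p q ⟨g, hgpq⟩
    apply Quotient.sound
    show orbitClosureRel G Y (p : Y) (q : Y)
    refine ⟨(p : Y), subset_closure (MulAction.mem_orbit_self _), ?_⟩
    refine subset_closure ?_
    exact ⟨g, hgpq⟩
  have wd2 : ∀ x y : Y, s2.r x y →
      Quotient.mk s1 (⟨r x, hb x⟩ : P) = Quotient.mk s1 (⟨r y, hb y⟩ : P) := by
    intro x y hxy
    obtain ⟨g, hgxy⟩ := (hiff x y).1 hxy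
    apply Quotient.sound
    exact ⟨g⁻¹, by simp [← hgxy]⟩
  let F : Quotient s1 → Quotient s2 :=
    Quotient.lift (fun p : P => Quotient.mk s2 (p : Y)) wd1
  let Gm : Quotient s2 → Quotient s1 :=
    Quotient.lift (fun y : Y => Quotient.mk s1 (⟨r y, hb y⟩ : P)) wd2
  have hGF : ∀ a, Gm (F a) = a := by
    intro a
    induction a using Quotient.ind with
    | _ p =>
      show Quotient.mk s1 (⟨r (p : Y), hb _⟩ : P) = Quotient.mk s1 p
      apply Quotient.sound
      show (r (p : Y)) ∈ MulAction.orbit G (p : Y)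
      exact hrP _ p.2
  have hFG : ∀ b, F (Gm b) = b := by
    intro b
    induction b using Quotient.ind with
    | _ y =>
      show Quotient.mk s2 (r y) = Quotient.mk s2 y
      apply Quotient.sound
      show orbitClosureRel G Y (r y) y
      exact ⟨r y, subset_closure (MulAction.mem_orbit_self _), ha y⟩
  refine ⟨{ toFun := F, invFun := Gm, left_inv := hGF, right_inv := hFG,
            continuous_toFun := ?_, continuous_invFun := ?_ }, ?_, ?_⟩
  · exact Continuous.quotient_lift (continuous_quotient_mk'.comp continuous_subtype_val) wd1
  · exact Continuous.quotient_lift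
      ((continuous_quotient_mk'.comp (Continuous.subtype_mk hr hb))) wd2
  · intro p; rfl
  · intro y; rfl
end

section
/- Suppose in addition that G is a topological group acting continuously on Y, that Y is first countable, and that the quotient space Y/~ is first countable. Then for every p ∈ P and every G-invariant open set U ⊆ Y containing p, there exists a ~-saturated open set V with p ∈ V ⊆ U (a set is ~-saturated if it is a union of ~-equivalence classes). -/
/-- In the setting of the retraction `r : Y → Y` onto `P ⊆ Y`
(hypotheses (a)–(d)), suppose moreover that `G` is a topological group acting
continuously on `Y`, that `Y` is first countable, and that the quotient `Y/~` by the
relation `~` ("orbit closures intersect") is first countable. Then every `G`-invariant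
open set `U` containing a point `p ∈ P` contains a `~`-saturated open set `V` with
`p ∈ V ⊆ U`. -/
theorem invariant_nbhd_contains_saturated_nbhd
    {Y : Type*} [TopologicalSpace Y] [FirstCountableTopology Y]
    {G : Type*} [Group G] [TopologicalSpace G] [IsTopologicalGroup G]
    [MulAction G Y] [ContinuousSMul G Y]
    (P : Set Y) (r : Y → Y)
    (ha : ∀ y : Y, r y ∈ closure (MulAction.orbit G y))
    (hb : ∀ y : Y, r y ∈ P)
    (hc : ∀ y : Y, ∀ p ∈ P, ∀ q ∈ P, p ∈ closure (MulAction.orbit G y) →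
      q ∈ closure (MulAction.orbit G y) → ∃ g : G, g • p = q)
    (hPinv : ∀ g : G, ∀ p ∈ P, g • p ∈ P)
    (hr : Continuous r)
    (hrP : ∀ p ∈ P, r p ∈ MulAction.orbit G p)
    (hQ : FirstCountableTopology (Quot (orbitClosureRel G Y)))
    (p : Y) (hp : p ∈ P)
    (U : Set Y) (hUopen : IsOpen U) (hUinv : ∀ g : G, ∀ u ∈ U, g • u ∈ U)
    (hpU : p ∈ U) :
    ∃ V : Set Y, IsOpen V ∧ p ∈ V ∧ V ⊆ U ∧
      ∀ x ∈ V, ∀ y : Y, orbitClosureRel G Y x y → y ∈ V := by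
  -- Closures of orbits are `G`-invariant, hence absorb orbit closures of their points.
  have horbit_cl : ∀ x z : Y, z ∈ closure (MulAction.orbit G x) →
      closure (MulAction.orbit G z) ⊆ closure (MulAction.orbit G x) := by
    intro x z hz
    refine closure_minimal ?_ isClosed_closure
    rintro _ ⟨g, rfl⟩
    have hmaps : Set.MapsTo (fun w : Y => g • w)
        (MulAction.orbit G x) (MulAction.orbit G x) := by
      rintro _ ⟨h, rfl⟩
      exact ⟨g * h, by simp [mul_smul]⟩
    exact hmaps.closure (continuous_const_smul g) hz
  refine ⟨{y | r y ∈ U}, hUopen.preimage hr, ?_, ?_, ?_⟩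
  · -- `p ∈ V` since `r p ∈ G • p ⊆ U`.
    obtain ⟨g, hg⟩ := hrP p hp
    show r p ∈ U
    rw [← hg]
    exact hUinv g p hpU
  · -- `V ⊆ U`: `r y ∈ U ∩ closure (G • y)`, so `U` meets the orbit, and `U` is invariant.
    intro y hy
    obtain ⟨z, hzU, g, rfl⟩ :=
      mem_closure_iff.mp (ha y) U hUopen hy
    have := hUinv g⁻¹ _ hzU
    simpa using this
  · -- Saturation: if `x ~ y` then `r x` and `r y` lie in the same `G`-orbit.
    rintro x hx y ⟨z, hzx, hzy⟩
    have hrzx : r z ∈ closure (MulAction.orbit G x) := horbit_cl x z hzx (ha z)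
    have hrzy : r z ∈ closure (MulAction.orbit G y) := horbit_cl y z hzy (ha z)
    obtain ⟨g, hg⟩ := hc x (r x) (hb x) (r z) (hb z) (ha x) hrzx
    obtain ⟨g', hg'⟩ := hc y (r y) (hb y) (r z) (hb z) (ha y) hrzy
    show r y ∈ U
    have hrz : r z ∈ U := hg ▸ hUinv g (r x) hx
    have : g'⁻¹ • r z ∈ U := hUinv g'⁻¹ (r z) hrz
    rwa [← hg', inv_smul_smul] at this
end

section
/- For every x ∈ X there exist a sequence (t_n) of positive real numbers with t_n → 0 and a point y ∈ X with h(y) = 0 such that t_n • x converges to y in X. -/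
/-- With `X` metrizable carrying a continuous `ℂˣ`-action and
`h : X → ℂⁿ` continuous, proper, homogeneous of degrees `d j ≥ 1` (positive reals acting
through their image in `ℂˣ`): for every `x ∈ X` there are positive reals `t n → 0` and a
point `y` with `h y = 0` such that `t n • x → y` in `X`. -/
theorem flows_into_nilpotent_cone
    {X : Type*} [TopologicalSpace X] [TopologicalSpace.MetrizableSpace X]
    [MulAction ℂˣ X] [ContinuousSMul ℂˣ X]
    {n : ℕ} (h : X → Fin n → ℂ) (hcont : Continuous h)
    (hproper : ∀ K : Set (Fin n → ℂ), IsCompact K → IsCompact (h ⁻¹' K))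
    (d : Fin n → ℕ) (hd : ∀ j, 1 ≤ d j)
    (hhom : ∀ (t : ℂˣ) (x : X) (j : Fin n), h (t • x) j = (t : ℂ) ^ d j * h x j)
    (x : X) :
    ∃ t : ℕ → ℝ, ∃ ht : ∀ k, 0 < t k,
      Filter.Tendsto t Filter.atTop (nhds 0) ∧
      ∃ y : X, h y = 0 ∧
        Filter.Tendsto
          (fun k => (Units.mk0 ((t k : ℂ)) (by
            exact_mod_cast (ht k).ne')) • x)
          Filter.atTop (nhds y) := by
  letI := TopologicalSpace.metrizableSpaceMetric X
  set s : ℕ → ℝ := fun k => 1 / (k + 1) with hs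
  have hspos : ∀ k, 0 < s k := fun k => by positivity
  have hs1 : ∀ k, s k ≤ 1 := by
    intro k
    rw [hs]
    simp only
    rw [div_le_one (by positivity)]
    linarith [Nat.cast_nonneg (α := ℝ) k]
  have hs0 : Filter.Tendsto s Filter.atTop (nhds 0) :=
    tendsto_one_div_add_atTop_nhds_zero_nat
  have hne : ∀ k, ((s k : ℂ)) ≠ 0 := fun k => by exact_mod_cast (hspos k).ne'
  set u : ℕ → X := fun k => (Units.mk0 ((s k : ℂ)) (hne k)) • x with hu
  have hcomp : ∀ k j, h (u k) j = (s k : ℂ) ^ d j * h x j := fun k j =>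
    hhom (Units.mk0 ((s k : ℂ)) (hne k)) x j
  have hnorm : ∀ k, ‖h (u k)‖ ≤ ‖h x‖ := by
    intro k
    rw [pi_norm_le_iff_of_nonneg (norm_nonneg _)]
    intro j
    rw [hcomp k j, norm_mul, norm_pow]
    calc ‖(s k : ℂ)‖ ^ d j * ‖h x j‖ ≤ 1 * ‖h x j‖ := by
          apply mul_le_mul_of_nonneg_right _ (norm_nonneg _)
          apply pow_le_one₀ (norm_nonneg _)
          rw [Complex.norm_real, Real.norm_eq_abs, abs_of_pos (hspos k)]
          exact hs1 k
      _ = ‖h x j‖ := one_mul _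
      _ ≤ ‖h x‖ := norm_le_pi_norm (h x) j
  have hC : IsCompact (h ⁻¹' Metric.closedBall 0 ‖h x‖) :=
    hproper _ (isCompact_closedBall _ _)
  have hmem : ∀ k, u k ∈ h ⁻¹' Metric.closedBall 0 ‖h x‖ := by
    intro k
    simp only [Set.mem_preimage, Metric.mem_closedBall, dist_zero_right]
    exact hnorm k
  obtain ⟨y, _, φ, hφ, hconv⟩ := hC.tendsto_subseq hmem
  have hhu0 : Filter.Tendsto (fun k => h (u k)) Filter.atTop (nhds 0) := by
    rw [tendsto_pi_nhds]
    intro j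
    have h1 : Filter.Tendsto (fun k => ((s k : ℂ))) Filter.atTop (nhds 0) := by
      have := (Complex.continuous_ofReal.tendsto 0).comp hs0
      simpa [Function.comp_def] using this
    have h2 : Filter.Tendsto (fun k => ((s k : ℂ)) ^ d j * h x j) Filter.atTop
        (nhds (0 ^ d j * h x j)) := (h1.pow (d j)).mul_const _
    rw [zero_pow (Nat.one_le_iff_ne_zero.mp (hd j)), zero_mul] at h2
    have : (fun k => h (u k) j) = fun k => ((s k : ℂ)) ^ d j * h x j :=
      funext fun k => hcomp k j
    rw [this]
    simpa using h2
  have hy0 : h y = 0 := by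
    have hA : Filter.Tendsto (fun k => h (u (φ k))) Filter.atTop (nhds (h y)) :=
      (hcont.tendsto y).comp hconv
    have hB : Filter.Tendsto (fun k => h (u (φ k))) Filter.atTop (nhds 0) :=
      hhu0.comp hφ.tendsto_atTop
    exact tendsto_nhds_unique hA hB
  exact ⟨fun k => s (φ k), fun k => hspos _, hs0.comp hφ.tendsto_atTop, y, hy0, hconv⟩
end

section
/- If x ∈ X satisfies h(x) ≠ 0, then f(t • x) tends to −∞ as the positive real parameter t tends to +∞. -/
/-- With `X` metrizable carrying a continuous `ℂˣ`-action,
`h : X → ℂⁿ` continuous, proper, homogeneous of degrees `d j ≥ 1` (positive reals acting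
through their image in `ℂˣ`), and `f : X → ℝ` continuous, proper and nonpositive: if
`h x ≠ 0`, then `f (t • x) → -∞` as the positive real parameter `t → +∞`. -/
theorem f_unbounded_below_along_orbit
    {X : Type*} [TopologicalSpace X] [TopologicalSpace.MetrizableSpace X]
    [MulAction ℂˣ X] [ContinuousSMul ℂˣ X]
    {n : ℕ} (h : X → Fin n → ℂ) (hcont : Continuous h)
    (hproper : ∀ K : Set (Fin n → ℂ), IsCompact K → IsCompact (h ⁻¹' K))
    (d : Fin n → ℕ) (hd : ∀ j, 1 ≤ d j)
    (hhom : ∀ (t : ℂˣ) (x : X) (j : Fin n), h (t • x) j = (t : ℂ) ^ d j * h x j)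
    (f : X → ℝ) (hf : Continuous f)
    (hfproper : ∀ K : Set ℝ, IsCompact K → IsCompact (f ⁻¹' K))
    (hfle : ∀ x, f x ≤ 0)
    (x : X) (hx : h x ≠ 0) :
    Filter.Tendsto
      (fun t : {t : ℝ // 0 < t} =>
        f ((Units.mk0 (((t : ℝ) : ℂ)) (by exact_mod_cast t.2.ne')) • x))
      Filter.atTop Filter.atBot := by
  -- Step 1: f tends to -∞ along the cocompact filter (properness + nonpositivity).
  have h2 : Filter.Tendsto f (Filter.cocompact X) Filter.atBot := by
    refine Filter.tendsto_atBot.2 fun b => ?_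
    have hK : IsCompact (f ⁻¹' Set.Icc b 0) := hfproper _ isCompact_Icc
    have hmem : (f ⁻¹' Set.Icc b 0)ᶜ ∈ Filter.cocompact X :=
      Filter.mem_cocompact.2 ⟨_, hK, le_refl _⟩
    filter_upwards [hmem] with y hy
    by_contra hb
    exact hy ⟨le_of_lt (lt_of_not_ge hb), hfle y⟩
  -- pick a coordinate where h x ≠ 0
  obtain ⟨j, hj⟩ : ∃ j, h x j ≠ 0 := by
    by_contra hc
    push_neg at hc
    exact hx (funext hc)
  -- Step 2: the orbit map tends to the cocompact filter.
  have hg : Filter.Tendsto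
      (fun t : {t : ℝ // 0 < t} =>
        (Units.mk0 (((t : ℝ) : ℂ)) (by exact_mod_cast t.2.ne') : ℂˣ) • x)
      Filter.atTop (Filter.cocompact X) := by
    refine Filter.hasBasis_cocompact.tendsto_right_iff.2 fun K hK => ?_
    -- bound on ‖h y j‖ for y ∈ K
    have hKc : IsCompact ((fun y => ‖h y j‖) '' K) :=
      hK.image ((continuous_norm.comp ((continuous_apply j).comp hcont)))
    obtain ⟨M, hM⟩ := hKc.isBounded.subset_closedBall 0
    have hMb : ∀ y ∈ K, ‖h y j‖ ≤ M := by
      intro y hy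
      have := hM (Set.mem_image_of_mem _ hy)
      simpa [Metric.mem_closedBall, Real.dist_eq, abs_le] using this
    -- choose a threshold
    set c : ℝ := ‖h x j‖ with hc
    have hcpos : 0 < c := norm_pos_iff.2 hj
    set t0 : ℝ := max 1 ((M + 1) / c) with ht0
    have ht0pos : (0 : ℝ) < t0 := lt_of_lt_of_le one_pos (le_max_left _ _)
    rw [Filter.eventually_atTop]
    refine ⟨⟨t0, ht0pos⟩, fun t ht => ?_⟩
    have htt0 : t0 ≤ (t : ℝ) := ht
    have ht1 : (1 : ℝ) ≤ (t : ℝ) := le_trans (le_max_left _ _) htt0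
    have htM : (M + 1) / c ≤ (t : ℝ) := le_trans (le_max_right _ _) htt0
    intro hmemK
    -- compute the norm of the j-th coordinate at t • x
    have hnorm : ‖h ((Units.mk0 (((t : ℝ) : ℂ)) (by exact_mod_cast t.2.ne') : ℂˣ) • x) j‖
        = (t : ℝ) ^ d j * c := by
      rw [hhom]
      simp only [norm_mul, norm_pow, Units.val_mk0, Complex.norm_real, Real.norm_eq_abs, abs_of_pos t.2, hc]
    have hle : ‖h ((Units.mk0 (((t : ℝ) : ℂ)) (by exact_mod_cast t.2.ne') : ℂˣ) • x) j‖ ≤ M :=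
      hMb _ hmemK
    rw [hnorm] at hle
    -- but (t : ℝ) ^ d j * c ≥ t * c ≥ M + 1 > M
    have hpow : (t : ℝ) ≤ (t : ℝ) ^ d j :=
      le_self_pow₀ ht1 (Nat.one_le_iff_ne_zero.mp (hd j))
    have h1 : M + 1 ≤ (t : ℝ) * c := by
      rw [div_le_iff₀ hcpos] at htM
      linarith
    have h2' : (t : ℝ) * c ≤ (t : ℝ) ^ d j * c :=
      mul_le_mul_of_nonneg_right hpow hcpos.le
    linarith
  exact h2.comp hg
end

section
/- The orbit space W/ℂ*, with the quotient topology, is compact. -/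
noncomputable def posUnit (t : ℝ) : ℂˣ :=
  if h : ((t : ℂ)) ≠ 0 then Units.mk0 _ h else 1

lemma posUnit_val {t : ℝ} (ht : t ≠ 0) : ((posUnit t : ℂˣ) : ℂ) = (t : ℂ) := by
  have : ((t:ℂ)) ≠ 0 := by exact_mod_cast Complex.ofReal_ne_zero.mpr ht
  simp [posUnit, this]

lemma posUnit_continuousOn : ContinuousOn posUnit {t : ℝ | 0 < t} := by
  rw [(Units.isEmbedding_embedProduct.toIsInducing).continuousOn_iff]
  have key : ∀ t ∈ {t : ℝ | 0 < t},
      (Units.embedProduct ℂ ∘ posUnit) t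
        = ((t : ℂ), MulOpposite.op ((t : ℂ))⁻¹) := by
    intro t ht
    have h1 : ((posUnit t : ℂˣ) : ℂ) = (t : ℂ) := posUnit_val ht.ne'
    simp only [Function.comp_apply, Units.embedProduct_apply]
    rw [Units.val_inv_eq_inv_val, h1]
  apply ContinuousOn.congr _ key
  apply ContinuousOn.prodMk
  · exact Complex.continuous_ofReal.continuousOn
  · apply MulOpposite.continuous_op.comp_continuousOn
    apply ContinuousOn.inv₀ Complex.continuous_ofReal.continuousOn
    intro t ht
    exact_mod_cast Complex.ofReal_ne_zero.mpr ht.ne'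


set_option maxHeartbeats 1000000 in
set_option synthInstance.maxHeartbeats 1000000 in
/-- With `X` metrizable carrying a continuous `ℂˣ`-action, `h : X → ℂⁿ`
continuous, proper, homogeneous of degrees `d j ≥ 1`, `f : X → ℝ` continuous, proper and
nonpositive, and `c < 0` with `f x > c` whenever `h x = 0`: the orbit space `W/ℂˣ` of
`W = (X × ℂ) \ (h⁻¹(0) × {0})` (with the quotient topology) is compact. -/
theorem cut_orbit_space_compact
    {X : Type*} [TopologicalSpace X] [TopologicalSpace.MetrizableSpace X]
    [MulAction ℂˣ X] [ContinuousSMul ℂˣ X]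
    {n : ℕ} (h : X → Fin n → ℂ) (hcont : Continuous h)
    (hproper : ∀ K : Set (Fin n → ℂ), IsCompact K → IsCompact (h ⁻¹' K))
    (d : Fin n → ℕ) (hd : ∀ j, 1 ≤ d j)
    (hhom : ∀ (t : ℂˣ) (x : X) (j : Fin n), h (t • x) j = (t : ℂ) ^ d j * h x j)
    (f : X → ℝ) (hf : Continuous f)
    (hfproper : ∀ K : Set ℝ, IsCompact K → IsCompact (f ⁻¹' K))
    (hfle : ∀ x, f x ≤ 0) (c : ℝ) (hc : c < 0)
    (hcf : ∀ x, h x = 0 → c < f x) :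
    CompactSpace
      (Quotient (MulAction.orbitRel ℂˣ (symplecticCutSubMulAction h d hhom))) := by
  set W := symplecticCutSubMulAction h d hhom with hW
  -- the compact slice
  set F : X × ℂ → ℝ := fun p => f p.1 - ‖p.2‖ ^ 2 / 2 with hF
  set K' : Set (X × ℂ) := F ⁻¹' {c} with hK'def
  have hFcont : Continuous F := by fun_prop
  have hK'closed : IsClosed K' := (isClosed_singleton).preimage hFcont
  have hK'sub : K' ⊆ (f ⁻¹' Set.Icc c 0) ×ˢ Metric.closedBall 0 (Real.sqrt (-2 * c)) := by
    intro p hp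
    have hp' : f p.1 - ‖p.2‖ ^ 2 / 2 = c := hp
    have h1 : 0 ≤ ‖p.2‖ := norm_nonneg _
    constructor
    · exact ⟨by nlinarith, hfle _⟩
    · rw [Metric.mem_closedBall, dist_zero_right]
      have h2 : ‖p.2‖ ^ 2 ≤ -2 * c := by nlinarith [hfle p.1]
      calc ‖p.2‖ = Real.sqrt (‖p.2‖ ^ 2) := by rw [Real.sqrt_sq h1]
        _ ≤ Real.sqrt (-2 * c) := Real.sqrt_le_sqrt h2
  have hK' : IsCompact K' := by
    apply IsCompact.of_isClosed_subset _ hK'closed hK'sub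
    exact (hfproper _ isCompact_Icc).prod (isCompact_closedBall _ _)
  have hK'W : K' ⊆ (W : Set (X × ℂ)) := by
    intro p hp
    intro hmem
    rw [Set.mem_prod] at hmem
    have hz : p.2 = 0 := hmem.2
    have hh : h p.1 = 0 := hmem.1
    have hp' : f p.1 - ‖p.2‖ ^ 2 / 2 = c := hp
    rw [hz] at hp'
    simp at hp'
    exact absurd hp' (ne_of_gt (hcf _ hh))
  -- the slice inside the subtype
  set K'' : Set (↥W) := Subtype.val ⁻¹' K' with hK''def
  have hK''cpt : IsCompact K'' := by
    rw [Topology.IsEmbedding.subtypeVal.isCompact_iff]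
    rwa [Set.image_preimage_eq_inter_range, Subtype.range_coe,
      Set.inter_eq_left.mpr hK'W]
  -- every orbit meets the slice
  have main : ∀ w : ↥W, ∃ t : ℂˣ, t • w ∈ K'' := by
    rintro ⟨⟨x, z⟩, hw⟩
    suffices hsuff : ∃ t : ℝ, 0 < t ∧ f (posUnit t • x) - t ^ 2 * ‖z‖ ^ 2 / 2 = c by
      obtain ⟨t, ht, hFt⟩ := hsuff
      refine ⟨posUnit t, ?_⟩
      show F (posUnit t • (x, z)) ∈ ({c} : Set ℝ)
      rw [Set.mem_singleton_iff]
      show f (posUnit t • x) - ‖(posUnit t : ℂ) * z‖ ^ 2 / 2 = c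
      rw [posUnit_val ht.ne', norm_mul, Complex.norm_real, Real.norm_eq_abs,
        abs_of_pos ht, mul_pow]
      exact hFt
    -- norm of scaled points
    have hnorm : ∀ t : ℝ, 0 < t → ∀ j, ‖h (posUnit t • x) j‖ = t ^ d j * ‖h x j‖ := by
      intro t ht j
      rw [hhom, posUnit_val ht.ne', norm_mul, norm_pow, Complex.norm_real,
        Real.norm_eq_abs, abs_of_pos ht]
    -- ε : points where h is small have f > c
    obtain ⟨ε, hε0, hε1, hεprop⟩ :
        ∃ ε : ℝ, 0 < ε ∧ ε ≤ 1 ∧ ∀ y, ‖h y‖ ≤ ε → c < f y := by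
      set C : Set X := h ⁻¹' Metric.closedBall 0 1 ∩ f ⁻¹' Set.Iic c with hC
      have hCcpt : IsCompact C :=
        (hproper _ (isCompact_closedBall _ _)).inter_right ((isClosed_Iic).preimage hf)
      by_cases hCne : C.Nonempty
      · obtain ⟨y₀, hy₀C, hy₀min⟩ := hCcpt.exists_isMinOn hCne (hcont.norm).continuousOn
        have hm : 0 < ‖h y₀‖ := by
          rw [norm_pos_iff]
          intro h0
          exact absurd (hcf _ h0) (not_lt.mpr hy₀C.2)
        refine ⟨min (‖h y₀‖ / 2) 1, by positivity, min_le_right _ _, ?_⟩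
        intro y hy
        by_contra hyc
        push_neg at hyc
        have hyC : y ∈ C := by
          refine ⟨Metric.mem_closedBall.mpr ?_, hyc⟩
          rw [dist_zero_right]
          exact hy.trans (min_le_right _ _)
        have h6 : ‖h y₀‖ ≤ ‖h y‖ := hy₀min hyC
        have h7 : ‖h y‖ ≤ ‖h y₀‖ / 2 := hy.trans (min_le_left _ _)
        linarith
      · refine ⟨1, one_pos, le_refl 1, ?_⟩
        intro y hy
        by_contra hyc
        push_neg at hyc
        refine hCne ⟨y, Metric.mem_closedBall.mpr ?_, hyc⟩
        rw [dist_zero_right]; exact hy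
    -- smallness of scaled h
    have hsmall : ∀ t : ℝ, 0 < t → t ≤ min 1 (ε / (‖h x‖ + 1)) →
        ‖h (posUnit t • x)‖ ≤ ε := by
      intro t ht htle
      rw [pi_norm_le_iff_of_nonneg hε0.le]
      intro j
      rw [hnorm t ht j]
      have h1 : t ≤ 1 := htle.trans (min_le_left _ _)
      have h2 : t ≤ ε / (‖h x‖ + 1) := htle.trans (min_le_right _ _)
      have h3 : t ^ d j ≤ t :=
        pow_le_of_le_one ht.le h1 (Nat.one_le_iff_ne_zero.mp (hd j))
      have h4 : ‖h x j‖ ≤ ‖h x‖ + 1 := (norm_le_pi_norm _ j).trans (by linarith [norm_nonneg (h x)])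
      have h5 : (0:ℝ) < ‖h x‖ + 1 := by positivity
      calc t ^ d j * ‖h x j‖ ≤ t * (‖h x‖ + 1) :=
            mul_le_mul h3 h4 (norm_nonneg _) ht.le
        _ ≤ (ε / (‖h x‖ + 1)) * (‖h x‖ + 1) := mul_le_mul_of_nonneg_right h2 h5.le
        _ = ε := div_mul_cancel₀ _ h5.ne'
    set t' : ℝ := min 1 (ε / (‖h x‖ + 1)) with ht'def
    have ht' : 0 < t' := lt_min one_pos (by positivity)
    -- δ : lower bound for f on the ε-sublevel set of ‖h‖
    set D : Set X := h ⁻¹' Metric.closedBall 0 ε with hDdef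
    have hDcpt : IsCompact D := hproper _ (isCompact_closedBall 0 ε)
    have hmemD : ∀ t : ℝ, 0 < t → t ≤ t' → posUnit t • x ∈ D := by
      intro t ht htle
      show h (posUnit t • x) ∈ Metric.closedBall 0 ε
      rw [Metric.mem_closedBall, dist_zero_right]
      exact hsmall t ht htle
    have hDne : D.Nonempty := ⟨posUnit t' • x, hmemD t' ht' le_rfl⟩
    obtain ⟨y₁, hy₁D, hy₁min⟩ := hDcpt.exists_isMinOn hDne hf.continuousOn
    set δ : ℝ := f y₁ - c with hδdef
    have hδ : 0 < δ := by
      have : c < f y₁ := by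
        apply hεprop
        have := hy₁D
        rwa [Set.mem_preimage, Metric.mem_closedBall, dist_zero_right] at this
      simp only [hδdef]; linarith
    have hDlb : ∀ y ∈ D, c + δ ≤ f y := by
      intro y hy
      have h8 : f y₁ ≤ f y := hy₁min hy
      simp only [hδdef]; linarith
    -- t₀ : lower end for the IVT
    set t₀ : ℝ := min t' (Real.sqrt (2 * δ) / (‖z‖ + 1)) with ht₀def
    have ht₀pos : 0 < t₀ := lt_min ht' (by positivity)
    have hg0 : c ≤ f (posUnit t₀ • x) - t₀ ^ 2 * ‖z‖ ^ 2 / 2 := by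
      have hx0 : posUnit t₀ • x ∈ D := hmemD t₀ ht₀pos (min_le_left _ _)
      have h1 := hDlb _ hx0
      have hz1 : (0:ℝ) < ‖z‖ + 1 := by positivity
      have ha : t₀ * (‖z‖ + 1) ≤ Real.sqrt (2 * δ) := by
        have hb : t₀ ≤ Real.sqrt (2 * δ) / (‖z‖ + 1) := min_le_right _ _
        calc t₀ * (‖z‖ + 1) ≤ (Real.sqrt (2 * δ) / (‖z‖ + 1)) * (‖z‖ + 1) :=
              mul_le_mul_of_nonneg_right hb hz1.le
          _ = Real.sqrt (2 * δ) := div_mul_cancel₀ _ hz1.ne'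
      have hsq : (t₀ * (‖z‖ + 1)) ^ 2 ≤ 2 * δ := by
        have hs := Real.sq_sqrt (by positivity : (0:ℝ) ≤ 2 * δ)
        nlinarith [mul_self_le_mul_self (by positivity : (0:ℝ) ≤ t₀ * (‖z‖ + 1)) ha]
      have h2 : t₀ ^ 2 * ‖z‖ ^ 2 ≤ 2 * δ := by
        nlinarith [mul_nonneg (sq_nonneg t₀) (by positivity : (0:ℝ) ≤ 2 * ‖z‖ + 1)]
      linarith
    -- t₁ : upper end for the IVT
    obtain ⟨t₁, ht₁ge, hg1⟩ :
        ∃ t₁ : ℝ, t₀ ≤ t₁ ∧ f (posUnit t₁ • x) - t₁ ^ 2 * ‖z‖ ^ 2 / 2 ≤ c := by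
      by_cases hz : z = 0
      · have hxne : h x ≠ 0 := by
          intro h0
          exact hw ⟨by simpa using h0, by simpa using hz⟩
        obtain ⟨j, hj⟩ : ∃ j, h x j ≠ 0 := by
          by_contra hall; push_neg at hall
          exact hxne (funext hall)
        obtain ⟨R, hR⟩ := (hfproper _ isCompact_Icc).exists_bound_of_continuousOn
          hcont.continuousOn
        have hhj : (0:ℝ) < ‖h x j‖ := norm_pos_iff.mpr hj
        refine ⟨max t₀ (max 1 ((R + 1) / ‖h x j‖)), le_max_left _ _, ?_⟩
        set t₁ : ℝ := max t₀ (max 1 ((R + 1) / ‖h x j‖)) with ht₁def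
        have ht₁1 : 1 ≤ t₁ := le_trans (le_max_left _ _) (le_max_right _ _)
        have ht₁pos : 0 < t₁ := lt_of_lt_of_le one_pos ht₁1
        have hbig : R < ‖h (posUnit t₁ • x)‖ := by
          have hb := norm_le_pi_norm (h (posUnit t₁ • x)) j
          rw [hnorm t₁ ht₁pos j] at hb
          have h3 : t₁ ≤ t₁ ^ d j := le_self_pow₀ ht₁1 (Nat.one_le_iff_ne_zero.mp (hd j))
          have h4 : (R + 1) / ‖h x j‖ ≤ t₁ :=
            le_trans (le_max_right _ _) (le_max_right _ _)
          have h5 : R + 1 ≤ t₁ * ‖h x j‖ := by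
            rw [div_le_iff₀ hhj] at h4; linarith
          nlinarith [mul_le_mul_of_nonneg_right h3 hhj.le]
        have hnotin : posUnit t₁ • x ∉ f ⁻¹' Set.Icc c 0 := by
          intro hin
          exact absurd (hR _ hin) (not_le.mpr hbig)
        have hlt : f (posUnit t₁ • x) < c := by
          rcases lt_or_ge (f (posUnit t₁ • x)) c with h9 | h9
          · exact h9
          · exact absurd ⟨h9, hfle _⟩ hnotin
        nlinarith [sq_nonneg t₁, norm_nonneg z, sq_nonneg ‖z‖]
      · have hz0 : (0:ℝ) < ‖z‖ := norm_pos_iff.mpr hz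
        refine ⟨max t₀ (Real.sqrt (-2 * c) / ‖z‖), le_max_left _ _, ?_⟩
        set t₁ : ℝ := max t₀ (Real.sqrt (-2 * c) / ‖z‖) with ht₁def
        have h1 : Real.sqrt (-2 * c) / ‖z‖ ≤ t₁ := le_max_right _ _
        have h2 : Real.sqrt (-2 * c) ≤ t₁ * ‖z‖ := by
          rw [div_le_iff₀ hz0] at h1; linarith
        have h3 : -2 * c ≤ (t₁ * ‖z‖) ^ 2 := by
          nlinarith [Real.sq_sqrt (by linarith : (0:ℝ) ≤ -2 * c),
            Real.sqrt_nonneg (-2 * c)]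
        nlinarith [hfle (posUnit t₁ • x)]
    -- IVT
    have hIcc : Set.Icc t₀ t₁ ⊆ {t : ℝ | 0 < t} := fun t htm =>
      lt_of_lt_of_le ht₀pos htm.1
    have hgcont : ContinuousOn (fun t : ℝ => f (posUnit t • x) - t ^ 2 * ‖z‖ ^ 2 / 2)
        (Set.Icc t₀ t₁) := by
      apply ContinuousOn.sub
      · apply hf.comp_continuousOn
        exact continuous_smul.comp_continuousOn
          ((posUnit_continuousOn.mono hIcc).prodMk continuousOn_const)
      · exact (Continuous.continuousOn (by fun_prop))
    obtain ⟨t, htmem, htval⟩ := intermediate_value_Icc' ht₁ge hgcont ⟨hg1, hg0⟩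
    exact ⟨t, hIcc htmem, htval⟩
  -- conclude
  constructor
  have himg : (Set.univ : Set (Quotient (MulAction.orbitRel ℂˣ W))) = Quotient.mk _ '' K'' := by
    apply Set.eq_of_subset_of_subset _ (Set.subset_univ _)
    intro q _
    obtain ⟨w, rfl⟩ := Quotient.exists_rep q
    obtain ⟨t, ht⟩ := main w
    exact ⟨t • w, ht, Quotient.sound ⟨t, rfl⟩⟩
  rw [himg]
  exact hK''cpt.image continuous_quotient_mk'
end

section
/- The orbit space W/ℂ*, with the quotient topology, is a compact Hausdorff space, and the image of X × ℂ* in W/ℂ* is a dense open subset that is homeomorphic to X via the map induced by (x, z) ↦ z^{-1} • x. -/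
open Filter Topology NNReal

section Aux

variable {X : Type*} [MulAction ℂˣ X] {n : ℕ}

/-- Scale-equivariant "norm" on `X × ℂ` built from `h` and the weights `d`. -/
noncomputable def cutNorm (h : X → Fin n → ℂ) (d : Fin n → ℕ) (p : X × ℂ) : ℝ≥0 :=
  (Finset.univ.sup fun j => ‖h p.1 j‖₊ ^ ((d j : ℝ)⁻¹)) ⊔ ‖p.2‖₊

lemma mem_scsma_iff {h : X → Fin n → ℂ} {d : Fin n → ℕ}
    {hhom : ∀ (t : ℂˣ) (x : X) (j : Fin n), h (t • x) j = (t : ℂ) ^ d j * h x j}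
    (p : X × ℂ) :
    p ∈ symplecticCutSubMulAction h d hhom ↔ ¬(h p.1 = 0 ∧ p.2 = 0) := by
  change p ∈ (((h ⁻¹' {0}) ×ˢ ({0} : Set ℂ))ᶜ : Set (X × ℂ)) ↔ _
  rw [Set.mem_compl_iff, Set.mem_prod]
  simp [not_and]

section Topo

variable [TopologicalSpace X]

lemma cutNorm_continuous {h : X → Fin n → ℂ} (d : Fin n → ℕ) (hcont : Continuous h) :
    Continuous (cutNorm h d) := by
  apply Continuous.max
  · apply Continuous.finset_sup_apply
    intro j _
    exact (NNReal.continuous_rpow_const (by positivity)).comp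
      ((continuous_nnnorm.comp ((continuous_apply j).comp (hcont.comp continuous_fst))))
  · exact continuous_nnnorm.comp continuous_snd

end Topo

lemma cutNorm_smul {h : X → Fin n → ℂ} {d : Fin n → ℕ} (hd : ∀ j, 1 ≤ d j)
    (hhom : ∀ (t : ℂˣ) (x : X) (j : Fin n), h (t • x) j = (t : ℂ) ^ d j * h x j)
    (t : ℂˣ) (p : X × ℂ) :
    cutNorm h d (t • p) = ‖(t : ℂ)‖₊ * cutNorm h d p := by
  have h1 : (t • p).1 = t • p.1 := rfl
  have h2 : (t • p).2 = (t : ℂ) * p.2 := rfl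
  unfold cutNorm
  rw [h1, h2]
  have key : ∀ j : Fin n, ‖h (t • p.1) j‖₊ ^ ((d j : ℝ)⁻¹)
      = ‖(t : ℂ)‖₊ * ‖h p.1 j‖₊ ^ ((d j : ℝ)⁻¹) := by
    intro j
    rw [hhom t p.1 j]
    have hdj : (d j : ℝ) ≠ 0 := by
      have := hd j; positivity
    rw [nnnorm_mul, nnnorm_pow, NNReal.mul_rpow, ← NNReal.rpow_natCast (‖(t:ℂ)‖₊) (d j),
      ← NNReal.rpow_mul, mul_inv_cancel₀ hdj, NNReal.rpow_one]
  simp only [key]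
  rw [← NNReal.mul_finset_sup, nnnorm_mul]
  rcases le_total ((Finset.univ.sup fun j => ‖h p.1 j‖₊ ^ ((d j : ℝ)⁻¹))) ‖p.2‖₊ with hle | hle
  · rw [sup_eq_right.2 hle, sup_eq_right.2 (mul_le_mul_right hle _)]
  · rw [sup_eq_left.2 hle, sup_eq_left.2 (mul_le_mul_right hle _)]

lemma cutNorm_eq_zero {h : X → Fin n → ℂ} {d : Fin n → ℕ} (hd : ∀ j, 1 ≤ d j)
    (p : X × ℂ) (hp : h p.1 = 0 ∧ p.2 = 0) : cutNorm h d p = 0 := by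
  unfold cutNorm
  rw [hp.2]
  refine le_antisymm (sup_le (Finset.sup_le fun j _ => ?_) (by simp)) zero_le
  have hdj : ((d j : ℝ)⁻¹) ≠ 0 := by have := hd j; positivity
  simp [hp.1, NNReal.zero_rpow hdj]

lemma cutNorm_ne_zero {h : X → Fin n → ℂ} {d : Fin n → ℕ} (hd : ∀ j, 1 ≤ d j)
    (p : X × ℂ) (hp : ¬(h p.1 = 0 ∧ p.2 = 0)) : cutNorm h d p ≠ 0 := by
  intro h0
  apply hp
  unfold cutNorm at h0
  rw [← bot_eq_zero', sup_eq_bot_iff] at h0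
  obtain ⟨hsup, hz⟩ := h0
  constructor
  · funext j
    have hj : ‖h p.1 j‖₊ ^ ((d j : ℝ)⁻¹) = 0 :=
      le_antisymm ((Finset.le_sup (f := fun j => ‖h p.1 j‖₊ ^ ((d j : ℝ)⁻¹))
        (Finset.mem_univ j)).trans hsup.le) zero_le
    have hdj : ((d j : ℝ)⁻¹) ≠ 0 := by have := hd j; positivity
    rw [NNReal.rpow_eq_zero_iff] at hj
    simpa using hj.1
  · simpa using hz

section Topo2

variable [TopologicalSpace X]

lemma isCompact_slice {h : X → Fin n → ℂ} {d : Fin n → ℕ} (hd : ∀ j, 1 ≤ d j)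
    (hcont : Continuous h)
    (hproper : ∀ K : Set (Fin n → ℂ), IsCompact K → IsCompact (h ⁻¹' K)) :
    IsCompact {p : X × ℂ | cutNorm h d p = 1} := by
  have hsub : {p : X × ℂ | cutNorm h d p = 1} ⊆
      (h ⁻¹' (Set.univ.pi fun _ => Metric.closedBall (0:ℂ) 1)) ×ˢ Metric.closedBall (0:ℂ) 1 := by
    rintro ⟨x, z⟩ hp
    simp only [Set.mem_setOf_eq] at hp
    constructor
    · intro j _
      simp only [Metric.mem_closedBall, dist_zero_right]
      have h1 : ‖h x j‖₊ ^ ((d j : ℝ)⁻¹) ≤ 1 := by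
        calc ‖h x j‖₊ ^ ((d j : ℝ)⁻¹)
            ≤ cutNorm h d (x, z) :=
              le_sup_of_le_left (Finset.le_sup (f := fun j => ‖h x j‖₊ ^ ((d j : ℝ)⁻¹))
                (Finset.mem_univ j))
          _ = 1 := hp
      have hdj : (d j : ℝ) ≠ 0 := by have := hd j; positivity
      have h2 : (‖h x j‖₊ ^ ((d j : ℝ)⁻¹)) ^ (d j : ℝ) ≤ 1 :=
        NNReal.rpow_le_one h1 (by positivity)
      rw [← NNReal.rpow_mul, inv_mul_cancel₀ hdj, NNReal.rpow_one] at h2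
      exact_mod_cast h2
    · have h1 : ‖z‖₊ ≤ 1 := le_sup_right.trans_eq hp
      simpa [Metric.mem_closedBall, dist_zero_right] using (by exact_mod_cast h1 : ‖z‖ ≤ 1)
  have hK : IsCompact ((h ⁻¹' (Set.univ.pi fun _ => Metric.closedBall (0:ℂ) 1))
      ×ˢ Metric.closedBall (0:ℂ) 1) :=
    (hproper _ (isCompact_univ_pi fun _ => isCompact_closedBall _ _)).prod
      (isCompact_closedBall _ _)
  exact hK.of_isClosed_subset
    (isClosed_singleton.preimage (cutNorm_continuous d hcont)) hsub

end Topo2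

end Aux

section Quot

variable {X : Type*} [MulAction ℂˣ X] [TopologicalSpace X] {n : ℕ}

noncomputable def realUnit (r : ℝ≥0) (hr : r ≠ 0) : ℂˣ :=
  Units.mk0 ((r : ℝ) : ℂ) (by exact_mod_cast hr)

lemma nnnorm_realUnit (r : ℝ≥0) (hr : r ≠ 0) : ‖((realUnit r hr : ℂˣ) : ℂ)‖₊ = r := by
  simp [realUnit]

lemma compactSpace_quotient {h : X → Fin n → ℂ} {d : Fin n → ℕ} (hd : ∀ j, 1 ≤ d j)
    {hhom : ∀ (t : ℂˣ) (x : X) (j : Fin n), h (t • x) j = (t : ℂ) ^ d j * h x j}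
    (hcont : Continuous h)
    (hproper : ∀ K : Set (Fin n → ℂ), IsCompact K → IsCompact (h ⁻¹' K)) :
    CompactSpace (Quotient (MulAction.orbitRel ℂˣ (symplecticCutSubMulAction h d hhom))) := by
  set W := symplecticCutSubMulAction h d hhom with hW
  set KW : Set W := Subtype.val ⁻¹' {p : X × ℂ | cutNorm h d p = 1} with hKW
  have hcomp : IsCompact KW := by
    rw [IsEmbedding.subtypeVal.isCompact_iff]
    have himg : Subtype.val '' KW = {p : X × ℂ | cutNorm h d p = 1} := by
      apply Set.Subset.antisymm
      · rintro p ⟨w, hw, rfl⟩; exact hw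
      · intro p hp
        have hpW : p ∈ W := by
          show p ∈ symplecticCutSubMulAction h d hhom
          rw [mem_scsma_iff]
          intro hcon
          exact (one_ne_zero : (1:ℝ≥0) ≠ 0) ((cutNorm_eq_zero hd p hcon).symm.trans hp).symm
        exact ⟨⟨p, hpW⟩, hp, rfl⟩
    rw [himg]
    exact isCompact_slice hd hcont hproper
  constructor
  have hsurj : Quotient.mk (MulAction.orbitRel ℂˣ W) '' KW = Set.univ := by
    apply Set.eq_univ_of_forall
    intro y
    obtain ⟨w, rfl⟩ := Quotient.exists_rep y
    have hw : ¬(h (w : X × ℂ).1 = 0 ∧ (w : X × ℂ).2 = 0) :=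
      (mem_scsma_iff (hhom := hhom) (w : X × ℂ)).1 w.2
    have hr : cutNorm h d (w : X × ℂ) ≠ 0 := cutNorm_ne_zero hd _ hw
    set t : ℂˣ := realUnit (cutNorm h d (w : X × ℂ))⁻¹ (inv_ne_zero hr) with ht
    refine ⟨t • w, ?_, ?_⟩
    · show cutNorm h d ((t • w : W) : X × ℂ) = 1
      have hval : ((t • w : W) : X × ℂ) = t • (w : X × ℂ) := rfl
      rw [hval, cutNorm_smul hd hhom, ht, nnnorm_realUnit, inv_mul_cancel₀ hr]
    · exact Quotient.sound ((MulAction.orbitRel_apply).mpr (MulAction.mem_orbit _ t))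
  rw [← hsurj]
  exact hcomp.image continuous_quotient_mk'

end Quot

section Proper

variable {X : Type*} [MulAction ℂˣ X] [TopologicalSpace X]
  [TopologicalSpace.MetrizableSpace X] [ContinuousSMul ℂˣ X] {n : ℕ}

lemma nnnorm_pow_root_eq (m : ℕ) (hm : 1 ≤ m) (a : ℝ≥0) : (a ^ m) ^ ((m : ℝ)⁻¹) = a := by
  have hm' : (m : ℝ) ≠ 0 := by positivity
  rw [← NNReal.rpow_natCast a m, ← NNReal.rpow_mul, mul_inv_cancel₀ hm', NNReal.rpow_one]

lemma properSMul_scsma {h : X → Fin n → ℂ} {d : Fin n → ℕ} (hd : ∀ j, 1 ≤ d j)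
    {hhom : ∀ (t : ℂˣ) (x : X) (j : Fin n), h (t • x) j = (t : ℂ) ^ d j * h x j}
    (hcont : Continuous h) :
    ProperSMul ℂˣ (symplecticCutSubMulAction h d hhom) := by
  set W := symplecticCutSubMulAction h d hhom with hWdef
  rw [properSMul_iff_continuousSMul_ultrafilter_tendsto_t2]
  refine ⟨inferInstance, ?_⟩
  intro 𝒰 w₁ w₂ hT
  -- component limits
  have hA : Tendsto (fun gx : ℂˣ × W => gx.1 • gx.2) 𝒰 (𝓝 w₁) :=
    (continuous_fst.tendsto (w₁, w₂)).comp hT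
  have hB : Tendsto (fun gx : ℂˣ × W => gx.2) 𝒰 (𝓝 w₂) :=
    (continuous_snd.tendsto (w₁, w₂)).comp hT
  have hBz : Tendsto (fun gx : ℂˣ × W => ((gx.2 : X × ℂ)).2) 𝒰 (𝓝 ((w₂ : X × ℂ)).2) :=
    ((continuous_snd.comp continuous_subtype_val).tendsto w₂).comp hB
  have hAz : Tendsto (fun gx : ℂˣ × W => (gx.1 : ℂ) * ((gx.2 : X × ℂ)).2) 𝒰
      (𝓝 ((w₁ : X × ℂ)).2) :=
    ((continuous_snd.comp continuous_subtype_val).tendsto w₁).comp hA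
  have hBh : ∀ i, Tendsto (fun gx : ℂˣ × W => h ((gx.2 : X × ℂ)).1 i) 𝒰
      (𝓝 (h ((w₂ : X × ℂ)).1 i)) := fun i =>
    (((continuous_apply i).comp (hcont.comp (continuous_fst.comp
      continuous_subtype_val))).tendsto w₂).comp hB
  have hAh : ∀ i, Tendsto (fun gx : ℂˣ × W => (gx.1 : ℂ) ^ d i * h ((gx.2 : X × ℂ)).1 i) 𝒰
      (𝓝 (h ((w₁ : X × ℂ)).1 i)) := by
    intro i
    have base : Tendsto (fun gx : ℂˣ × W => h (((gx.1 • gx.2 : W) : X × ℂ)).1 i) 𝒰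
        (𝓝 (h ((w₁ : X × ℂ)).1 i)) :=
      (((continuous_apply i).comp (hcont.comp (continuous_fst.comp
        continuous_subtype_val))).tendsto w₁).comp hA
    refine base.congr fun gx => ?_
    have : (((gx.1 • gx.2 : W) : X × ℂ)).1 = gx.1 • ((gx.2 : X × ℂ)).1 := rfl
    rw [this, hhom]
  -- tendsto zero is impossible
  have hzero : ¬ Tendsto (fun gx : ℂˣ × W => (gx.1 : ℂ)) 𝒰 (𝓝 0) := by
    intro h0
    have hz1 : ((w₁ : X × ℂ)).2 = 0 := by
      have := tendsto_nhds_unique hAz (by simpa using h0.mul hBz)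
      simpa using this
    have hh1 : h ((w₁ : X × ℂ)).1 = 0 := by
      funext i
      have hdine : d i ≠ 0 := by have := hd i; omega
      have : Tendsto (fun gx : ℂˣ × W => (gx.1 : ℂ) ^ d i * h ((gx.2 : X × ℂ)).1 i) 𝒰
          (𝓝 ((0 : ℂ) ^ d i * h ((w₂ : X × ℂ)).1 i)) := (h0.pow (d i)).mul (hBh i)
      have := tendsto_nhds_unique (hAh i) this
      rw [zero_pow hdine, zero_mul] at this
      simpa using this
    exact (mem_scsma_iff (hhom := hhom) _).1 w₁.2 ⟨hh1, hz1⟩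
  -- find m ≥ 1 and a limit of g ^ m
  obtain ⟨m, hm1, c, hmc⟩ : ∃ m : ℕ, 1 ≤ m ∧ ∃ c : ℂ,
      Tendsto (fun gx : ℂˣ × W => (gx.1 : ℂ) ^ m) 𝒰 (𝓝 c) := by
    have hw2 := (mem_scsma_iff (hhom := hhom) _).1 w₂.2
    by_cases hz2 : ((w₂ : X × ℂ)).2 = 0
    · have hne : h ((w₂ : X × ℂ)).1 ≠ 0 := fun hcon => hw2 ⟨hcon, hz2⟩
      obtain ⟨j, hj⟩ := Function.ne_iff.1 hne
      refine ⟨d j, hd j, h ((w₁ : X × ℂ)).1 j / h ((w₂ : X × ℂ)).1 j, ?_⟩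
      have hdiv := (hAh j).div (hBh j) (by simpa using hj)
      have hev : ∀ᶠ gx : ℂˣ × W in 𝒰, h ((gx.2 : X × ℂ)).1 j ≠ 0 :=
        (hBh j).eventually_ne (by simpa using hj)
      refine hdiv.congr' (hev.mono fun gx hgx => ?_)
      simp only [Pi.div_apply]
      rw [mul_div_cancel_right₀ _ hgx]
    · refine ⟨1, le_refl 1, ((w₁ : X × ℂ)).2 / ((w₂ : X × ℂ)).2, ?_⟩
      have hdiv := hAz.div hBz hz2
      have hev : ∀ᶠ gx : ℂˣ × W in 𝒰, ((gx.2 : X × ℂ)).2 ≠ 0 := hBz.eventually_ne hz2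
      refine hdiv.congr' (hev.mono fun gx hgx => ?_)
      simp only [Pi.div_apply]
      rw [mul_div_cancel_right₀ _ hgx, pow_one]
  -- norm limits
  have hm' : ((m : ℝ)⁻¹) ≠ 0 := by positivity
  have hnn : Tendsto (fun gx : ℂˣ × W => ‖(gx.1 : ℂ)‖₊) 𝒰 (𝓝 (‖c‖₊ ^ ((m : ℝ)⁻¹))) := by
    have h1 : Tendsto (fun gx : ℂˣ × W => ‖(gx.1 : ℂ)‖₊ ^ m) 𝒰 (𝓝 (‖c‖₊)) := by
      have := hmc.nnnorm
      simpa [nnnorm_pow] using this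
    have h2 := (NNReal.continuous_rpow_const (le_of_lt (by positivity : (0:ℝ) < (m : ℝ)⁻¹))).tendsto
        (‖c‖₊) |>.comp h1
    refine h2.congr fun gx => ?_
    exact nnnorm_pow_root_eq m hm1 _
  by_cases hc : c = 0
  · exfalso
    apply hzero
    rw [hc, nnnorm_zero, NNReal.zero_rpow hm'] at hnn
    have : Tendsto (fun gx : ℂˣ × W => ‖(gx.1 : ℂ)‖) 𝒰 (𝓝 (0:ℝ)) := by
      have := (NNReal.tendsto_coe).2 hnn
      simpa using this
    rw [tendsto_zero_iff_norm_tendsto_zero]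
    exact this
  · -- compact annulus argument
    set ρ : ℝ≥0 := ‖c‖₊ ^ ((m : ℝ)⁻¹) with hρdef
    have hρ : ρ ≠ 0 := by
      rw [hρdef, ne_eq, NNReal.rpow_eq_zero_iff]
      simp [hc, hm']
    set A : Set ℂ := {t : ℂ | ‖t‖₊ ∈ Set.Icc (ρ / 2) (ρ + ρ)} with hAdef
    have hAcomp : IsCompact A := by
      refine (isCompact_closedBall (0:ℂ) ((ρ + ρ : ℝ≥0) : ℝ)).of_isClosed_subset
        (isClosed_Icc.preimage continuous_nnnorm) ?_
      intro t ht
      rw [Metric.mem_closedBall, dist_zero_right, ← coe_nnnorm, NNReal.coe_le_coe]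
      exact ht.2
    have hev : ∀ᶠ gx : ℂˣ × W in 𝒰, (gx.1 : ℂ) ∈ A := by
      refine hnn.eventually (Icc_mem_nhds ?_ ?_)
      · exact NNReal.half_lt_self hρ
      · exact lt_add_of_pos_right ρ (pos_iff_ne_zero.2 hρ)
    obtain ⟨b, hbA, hVb⟩ := hAcomp.ultrafilter_le_nhds
      (𝒰.map (fun gx : ℂˣ × W => (gx.1 : ℂ)))
      (by rwa [Ultrafilter.coe_map, le_principal_iff, Filter.mem_map])
    have hbne : b ≠ 0 := by
      intro hb0
      have h1 : ρ / 2 ≤ ‖b‖₊ := hbA.1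
      rw [hb0, nnnorm_zero, le_zero_iff] at h1
      exact hρ (by simpa using (div_eq_zero_iff.1 h1).resolve_right (by norm_num))
    refine ⟨Units.mk0 b hbne, ?_⟩
    rw [Units.isEmbedding_val₀.tendsto_nhds_iff]
    exact hVb
end Proper


section Main

variable {X : Type*} [TopologicalSpace X] [TopologicalSpace.MetrizableSpace X]
  [MulAction ℂˣ X] [ContinuousSMul ℂˣ X] {n : ℕ}

set_option maxHeartbeats 1000000 in
set_option synthInstance.maxHeartbeats 1000000 in
theorem cut_orbit_space_compactification'
    (h : X → Fin n → ℂ) (hcont : Continuous h)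
    (hproper : ∀ K : Set (Fin n → ℂ), IsCompact K → IsCompact (h ⁻¹' K))
    (d : Fin n → ℕ) (hd : ∀ j, 1 ≤ d j)
    (hhom : ∀ (t : ℂˣ) (x : X) (j : Fin n), h (t • x) j = (t : ℂ) ^ d j * h x j) :
    CompactSpace
      (Quotient (MulAction.orbitRel ℂˣ (symplecticCutSubMulAction h d hhom))) ∧
    T2Space
      (Quotient (MulAction.orbitRel ℂˣ (symplecticCutSubMulAction h d hhom))) ∧
    IsOpen (Quotient.mk (MulAction.orbitRel ℂˣ (symplecticCutSubMulAction h d hhom)) ''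
      {p : symplecticCutSubMulAction h d hhom | (p : X × ℂ).2 ≠ 0}) ∧
    Dense (Quotient.mk (MulAction.orbitRel ℂˣ (symplecticCutSubMulAction h d hhom)) ''
      {p : symplecticCutSubMulAction h d hhom | (p : X × ℂ).2 ≠ 0}) ∧
    ∃ e : (Quotient.mk (MulAction.orbitRel ℂˣ (symplecticCutSubMulAction h d hhom)) ''
        {p : symplecticCutSubMulAction h d hhom | (p : X × ℂ).2 ≠ 0}) ≃ₜ X,
      ∀ (p : symplecticCutSubMulAction h d hhom) (hz : (p : X × ℂ).2 ≠ 0),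
        e ⟨Quotient.mk (MulAction.orbitRel ℂˣ (symplecticCutSubMulAction h d hhom)) p,
            ⟨p, hz, rfl⟩⟩
          = (Units.mk0 ((p : X × ℂ).2) hz)⁻¹ • (p : X × ℂ).1 := by
  set W := symplecticCutSubMulAction h d hhom with hWdef
  set q : W → Quotient (MulAction.orbitRel ℂˣ W) :=
    Quotient.mk (MulAction.orbitRel ℂˣ W) with hqdef
  have hq : IsOpenQuotientMap q := MulAction.isOpenQuotientMap_quotientMk
  set S : Set W := {p : W | (p : X × ℂ).2 ≠ 0} with hSdef
  have hS : IsOpen S :=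
    (isOpen_compl_singleton).preimage (continuous_snd.comp continuous_subtype_val)
  -- the relation
  have hrel : ∀ p p' : W, q p = q p' → ∃ t : ℂˣ, t • p' = p := by
    intro p p' hqq
    have := Quotient.exact hqq
    exact MulAction.mem_orbit_iff.1 this
  -- the normalization map
  set φ : W → X := fun w =>
    if hz : ((w : X × ℂ)).2 = 0 then ((w : X × ℂ)).1
    else (Units.mk0 ((w : X × ℂ)).2 hz)⁻¹ • ((w : X × ℂ)).1 with hφdef
  have hφS : ∀ (w : W) (hz : ((w : X × ℂ)).2 ≠ 0),
      φ w = (Units.mk0 ((w : X × ℂ)).2 hz)⁻¹ • ((w : X × ℂ)).1 := fun w hz => dif_neg hz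
  have hφsmul : ∀ (t : ℂˣ) (w : W), ((w : X × ℂ)).2 ≠ 0 → φ (t • w) = φ w := by
    intro t w hz
    have hval : ((t • w : W) : X × ℂ) = t • (w : X × ℂ) := rfl
    have hz2 : ((t • w : W) : X × ℂ).2 = (t : ℂ) * ((w : X × ℂ)).2 := rfl
    have hz' : ((t • w : W) : X × ℂ).2 ≠ 0 := by
      rw [hz2]; exact mul_ne_zero t.ne_zero hz
    rw [hφS _ hz', hφS _ hz]
    have hu : Units.mk0 (((t • w : W) : X × ℂ)).2 hz'
        = t * Units.mk0 ((w : X × ℂ)).2 hz := by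
      ext; exact hz2
    have hx1 : (((t • w : W) : X × ℂ)).1 = t • ((w : X × ℂ)).1 := rfl
    rw [hu, hx1, mul_inv_rev, mul_smul, inv_smul_smul]
  -- saturation of S
  have hsat : ∀ (p : W), p ∈ S → ∀ (p' : W), q p' = q p → p' ∈ S ∧ φ p' = φ p := by
    intro p hp p' hqq
    obtain ⟨t, ht⟩ := hrel p' p hqq
    have hz' : ((p' : X × ℂ)).2 ≠ 0 := by
      rw [← ht]
      show (t : ℂ) * ((p : X × ℂ)).2 ≠ 0
      exact mul_ne_zero t.ne_zero hp
    refine ⟨hz', ?_⟩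
    rw [← ht, hφsmul t p hp]
  have hout : ∀ (p : W), p ∈ S → (q p).out ∈ S ∧ φ ((q p).out) = φ p := by
    intro p hp
    exact hsat p hp _ (by rw [hqdef]; exact Quotient.out_eq _)
  refine ⟨compactSpace_quotient hd hcont hproper, ?_, hq.isOpenMap _ hS, ?_, ?_⟩
  · have := properSMul_scsma hd (hhom := hhom) hcont
    exact t2Space_quotient_mulAction_of_properSMul
  · -- density
    have hDS : Dense S := by
      intro w
      by_cases hz : ((w : X × ℂ)).2 = 0
      · have hw := (mem_scsma_iff (hhom := hhom) _).1 w.2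
        have hhx : ¬ h ((w : X × ℂ)).1 = 0 := fun hcon => hw ⟨hcon, hz⟩
        have hmem : ∀ ε : ℂ, ((((w : X × ℂ)).1, ε) : X × ℂ) ∈ W := by
          intro ε
          show _ ∈ symplecticCutSubMulAction h d hhom
          rw [mem_scsma_iff]
          intro hcon
          exact hhx hcon.1
        set γ : ℂ → W := fun ε => ⟨(((w : X × ℂ)).1, ε), hmem ε⟩ with hγdef
        have hγc : Continuous γ :=
          Continuous.subtype_mk (continuous_const.prodMk continuous_id) _
        have hγ0 : γ 0 = w := by
          apply Subtype.ext
          exact Prod.ext rfl hz.symm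
        have htend : Filter.Tendsto γ (𝓝[≠] (0:ℂ)) (𝓝 w) := by
          rw [← hγ0]
          exact (hγc.tendsto 0).mono_left nhdsWithin_le_nhds
        refine mem_closure_of_tendsto htend ?_
        refine eventually_nhdsWithin_of_forall ?_
        intro ε hε
        exact hε
      · exact subset_closure hz
    have h1 : q '' closure S ⊆ closure (q '' S) := image_closure_subset_closure_image
      hq.continuous
    rw [hDS.closure_eq, Set.image_univ, hq.surjective.range_eq] at h1
    rw [dense_iff_closure_eq]
    exact Set.eq_univ_of_univ_subset h1
  · -- the homeomorphism
    have hmem1 : ∀ x : X, ((x, (1:ℂ)) : X × ℂ) ∈ W := by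
      intro x
      show _ ∈ symplecticCutSubMulAction h d hhom
      rw [mem_scsma_iff]
      intro hcon
      exact one_ne_zero hcon.2
    set F : (q '' S : Set _) → X := fun y => φ (y.1.out) with hFdef
    set G : X → (q '' S : Set _) := fun x =>
      ⟨q ⟨(x, 1), hmem1 x⟩, ⟨⟨(x, 1), hmem1 x⟩, one_ne_zero, rfl⟩⟩ with hGdef
    -- F on representatives
    have hFq : ∀ (p : W) (hp : p ∈ S) (hy : q p ∈ q '' S), F ⟨q p, hy⟩ = φ p := by
      intro p hp hy
      exact (hout p hp).2
    -- G ∘ φ = q on S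
    have hGφ : ∀ (p : W) (hp : p ∈ S), (G (φ p)).1 = q p := by
      intro p hp
      show q ⟨(φ p, 1), hmem1 _⟩ = q p
      set u : ℂˣ := Units.mk0 ((p : X × ℂ)).2 hp with hudef
      have hsm : u⁻¹ • p = (⟨(φ p, 1), hmem1 _⟩ : W) := by
        apply Subtype.ext
        have hv : (((u⁻¹ • p : W)) : X × ℂ)
            = ((u⁻¹ : ℂˣ) • ((p : X × ℂ)).1, ((u⁻¹ : ℂˣ) : ℂ) * ((p : X × ℂ)).2) := rfl
        rw [hv, hφS p hp]
        have h2 : ((u⁻¹ : ℂˣ) : ℂ) * ((p : X × ℂ)).2 = 1 := by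
          rw [Units.val_inv_eq_inv_val, hudef]
          exact inv_mul_cancel₀ hp
        rw [h2, hudef]
      have hmem : (⟨(φ p, 1), hmem1 _⟩ : W) ∈ MulAction.orbit ℂˣ p :=
        MulAction.mem_orbit_iff.2 ⟨u⁻¹, hsm⟩
      exact Quotient.sound hmem
    -- inverses
    have hGF : ∀ y, G (F y) = y := by
      rintro ⟨cls, hcls⟩
      obtain ⟨p, hp, hqp⟩ := hcls
      have hpo : cls.out ∈ S ∧ φ cls.out = φ p := by
        have := hsat p hp cls.out (by rw [← hqp, hqdef]; exact Quotient.out_eq _)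
        exact this
      apply Subtype.ext
      show (G (φ cls.out)).1 = cls
      rw [hGφ cls.out hpo.1]
      exact Quotient.out_eq cls
    have hFG : ∀ x, F (G x) = x := by
      intro x
      show φ ((q ⟨(x,1), hmem1 x⟩).out) = x
      rw [(hout ⟨(x,1), hmem1 x⟩ one_ne_zero).2]
      rw [hφS _ (one_ne_zero : ((⟨(x,1), hmem1 x⟩ : W) : X × ℂ).2 ≠ 0)]
      show (Units.mk0 (1:ℂ) _)⁻¹ • x = x
      rw [Units.mk0_one, inv_one, one_smul]
    -- continuity of G
    have hGcont : Continuous G := by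
      refine Continuous.subtype_mk ?_ _
      exact hq.continuous.comp (Continuous.subtype_mk
        (continuous_id.prodMk continuous_const) _)
    -- continuity of F, via the restricted quotient map
    have hFcont : Continuous F := by
      set r : S → (q '' S : Set _) := fun p => ⟨q p.1, ⟨p.1, p.2, rfl⟩⟩ with hrdef
      have hrcont : Continuous r :=
        Continuous.subtype_mk (hq.continuous.comp continuous_subtype_val) _
      have hrsurj : Function.Surjective r := by
        rintro ⟨cls, p, hp, hqp⟩
        exact ⟨⟨p, hp⟩, Subtype.ext hqp⟩
      have hropen : IsOpenMap r := by
        intro U hU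
        have hU' : IsOpen (Subtype.val '' U) := hS.isOpenMap_subtype_val U hU
        have himg : r '' U = Subtype.val ⁻¹' (q '' (Subtype.val '' U)) := by
          apply Set.Subset.antisymm
          · rintro _ ⟨p, hpU, rfl⟩
            exact ⟨p.1, ⟨p, hpU, rfl⟩, rfl⟩
          · rintro ⟨cls, hcls⟩ ⟨p₀, ⟨pp, hpp, rfl⟩, hq0⟩
            exact ⟨pp, hpp, Subtype.ext hq0⟩
        rw [himg]
        exact (hq.isOpenMap _ hU').preimage continuous_subtype_val
      have hrquot : IsQuotientMap r := hropen.isQuotientMap hrcont hrsurj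
      rw [hrquot.continuous_iff]
      have hcomp : F ∘ r = fun p : S => φ p.1 := by
        funext p
        show F ⟨q p.1, _⟩ = φ p.1
        exact hFq p.1 p.2 _
      rw [hcomp]
      have : (fun p : S => φ p.1) = fun p : S =>
          (Units.mk0 ((p.1 : X × ℂ)).2 p.2)⁻¹ • ((p.1 : X × ℂ)).1 := by
        funext p
        exact hφS p.1 p.2
      rw [this]
      have hc1 : Continuous (fun p : S => ((Units.mk0 ((p.1 : X × ℂ)).2 p.2)⁻¹ : ℂˣ)) := by
        rw [Units.isEmbedding_val₀.continuous_iff]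
        simp only [Function.comp_def]
        have : (fun p : S => (((Units.mk0 ((p.1 : X × ℂ)).2 p.2)⁻¹ : ℂˣ) : ℂ))
            = fun p : S => (((p.1 : X × ℂ)).2)⁻¹ := by
          funext p
          rw [Units.val_inv_eq_inv_val]
          rfl
        rw [this]
        exact Continuous.inv₀
          (continuous_snd.comp (continuous_subtype_val.comp continuous_subtype_val))
          (fun p => p.2)
      exact hc1.smul
        (continuous_fst.comp (continuous_subtype_val.comp continuous_subtype_val))
    refine ⟨⟨⟨F, G, hGF, hFG⟩, hFcont, hGcont⟩, ?_⟩
    intro p hz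
    show F ⟨q p, ⟨p, hz, rfl⟩⟩ = _
    rw [hFq p hz ⟨p, hz, rfl⟩]
    exact hφS p hz

end Main

set_option synthInstance.maxHeartbeats 1000000 in
/-- With `X` metrizable carrying a continuous `ℂˣ`-action, `h : X → ℂⁿ`
continuous, proper, homogeneous of degrees `d j ≥ 1`, `f : X → ℝ` continuous, proper and
nonpositive, and `c < 0` with `f x > c` whenever `h x = 0`: the orbit space `W/ℂˣ` of
`W = (X × ℂ) \ (h⁻¹(0) × {0})` (with the quotient topology) is a compact Hausdorff
space, and the image of `X × ℂˣ` in `W/ℂˣ` is a dense open subset homeomorphic to `X`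
via the map induced by `(x, z) ↦ z⁻¹ • x`. -/
theorem cut_orbit_space_compactification
    {X : Type*} [TopologicalSpace X] [TopologicalSpace.MetrizableSpace X]
    [MulAction ℂˣ X] [ContinuousSMul ℂˣ X]
    {n : ℕ} (h : X → Fin n → ℂ) (hcont : Continuous h)
    (hproper : ∀ K : Set (Fin n → ℂ), IsCompact K → IsCompact (h ⁻¹' K))
    (d : Fin n → ℕ) (hd : ∀ j, 1 ≤ d j)
    (hhom : ∀ (t : ℂˣ) (x : X) (j : Fin n), h (t • x) j = (t : ℂ) ^ d j * h x j)
    (f : X → ℝ) (hf : Continuous f)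
    (hfproper : ∀ K : Set ℝ, IsCompact K → IsCompact (f ⁻¹' K))
    (hfle : ∀ x, f x ≤ 0) (c : ℝ) (hc : c < 0)
    (hcf : ∀ x, h x = 0 → c < f x) :
    CompactSpace
      (Quotient (MulAction.orbitRel ℂˣ (symplecticCutSubMulAction h d hhom))) ∧
    T2Space
      (Quotient (MulAction.orbitRel ℂˣ (symplecticCutSubMulAction h d hhom))) ∧
    IsOpen (Quotient.mk (MulAction.orbitRel ℂˣ (symplecticCutSubMulAction h d hhom)) ''
      {p : symplecticCutSubMulAction h d hhom | (p : X × ℂ).2 ≠ 0}) ∧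
    Dense (Quotient.mk (MulAction.orbitRel ℂˣ (symplecticCutSubMulAction h d hhom)) ''
      {p : symplecticCutSubMulAction h d hhom | (p : X × ℂ).2 ≠ 0}) ∧
    ∃ e : (Quotient.mk (MulAction.orbitRel ℂˣ (symplecticCutSubMulAction h d hhom)) ''
        {p : symplecticCutSubMulAction h d hhom | (p : X × ℂ).2 ≠ 0}) ≃ₜ X,
      ∀ (p : symplecticCutSubMulAction h d hhom) (hz : (p : X × ℂ).2 ≠ 0),
        e ⟨Quotient.mk (MulAction.orbitRel ℂˣ (symplecticCutSubMulAction h d hhom)) p,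
            ⟨p, hz, rfl⟩⟩
          = (Units.mk0 ((p : X × ℂ).2) hz)⁻¹ • (p : X × ℂ).1 := by
  exact cut_orbit_space_compactification' h hcont hproper d hd hhom
end
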